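/- arXiv:1111.6431 — 9 statements merged into one kernel-verified Lean document; each statement's English description precedes it below -/
import Mathlib

section
/- The language L_UNIQ of uniquely decodable strings is factorial: if w ∈ L_UNIQ and u is a contiguous substring (factor) of w, then u ∈ L_UNIQ. -/
variable {α : Type*}

/-- The `$`-delimited version of a string over `α`; `none` plays the role of `$`. -/
def delim (w : List α) : List (Option α) :=
  none :: (w.map some ++ [none])

/-- The bigram count vector of `$w$`, as the multiset of adjacent ordered pairs
(multiset equality is the same as equality of all bigram counts). -/
def bigrams (w : List α) : Multiset (Option α × Option α) :=
  ((delim w).zip (delim w).tail : List (Option α × Option α))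

/-- A string is uniquely decodable if `$w$` is the only delimited string with its
bigram count vector. -/
def UniqDec (w : List α) : Prop :=
  ∀ v : List α, bigrams v = bigrams w → v = w

namespace Stmt1Aux

def zp {β : Type*} (l : List β) : List (β × β) := l.zip l.tail

lemma zp_split {β : Type*} (A B : List β) (x : β) :
    zp (A ++ x :: B) = zp (A ++ [x]) ++ zp (x :: B) := by
  induction A with
  | nil => simp [zp]
  | cons c A ih =>
    cases A with
    | nil => simp [zp]
    | cons d A' =>
      have h1 : zp (c :: d :: A' ++ x :: B) = (c, d) :: zp (d :: A' ++ x :: B) := rfl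
      have h2 : zp (c :: d :: A' ++ [x]) = (c, d) :: zp (d :: A' ++ [x]) := rfl
      simp only [List.cons_append] at *
      rw [h1, h2, ih, List.cons_append]

lemma card_bigrams (w : List α) : Multiset.card (bigrams w) = w.length + 1 := by
  simp [bigrams, delim, Multiset.coe_card, List.length_zip]

lemma bigrams_eq_zp (w : List α) : bigrams w = (zp (delim w) : List _) := rfl

lemma bigrams_decomp (s t u : List α) (a b : α)
    (ha : u.head? = some a) (hb : u.getLast? = some b) :
    bigrams (s ++ u ++ t) =
      (zp ((none :: s.map some) ++ [some a]) : List _)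
      + (zp (u.map some) : List _)
      + (zp (some b :: (t.map some ++ [none])) : List _) := by
  obtain ⟨u₀, rfl⟩ : ∃ u₀, u = a :: u₀ := by
    cases u with
    | nil => simp at ha
    | cons x l =>
      simp only [List.head?_cons, Option.some.injEq] at ha
      exact ⟨l, by rw [ha]⟩
  have hb' : (a :: u₀).dropLast ++ [b] = a :: u₀ := by
    have h := List.getLast?_eq_getLast (l := a :: u₀) (by simp)
    rw [h, Option.some.injEq] at hb
    rw [← hb]; exact List.dropLast_append_getLast (by simp)
  have key : delim (s ++ (a :: u₀) ++ t)
      = (none :: s.map some) ++ some a :: (u₀.map some ++ (t.map some ++ [none])) := by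
    simp [delim]
  rw [bigrams_eq_zp, key, zp_split (none :: s.map some) _ (some a)]
  have key2 : some a :: (u₀.map some ++ (t.map some ++ [none]))
      = ((a :: u₀).dropLast.map some) ++ some b :: (t.map some ++ [none]) := by
    conv_lhs => rw [show some a :: (u₀.map some ++ (t.map some ++ [none]))
      = ((a :: u₀).map some) ++ (t.map some ++ [none]) by simp]
    rw [← hb']
    simp
  rw [key2, zp_split ((a :: u₀).dropLast.map some) (t.map some ++ [none]) (some b)]
  have key3 : (a :: u₀).dropLast.map some ++ [some b] = (a :: u₀).map some := by
    rw [← hb']; simp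
  rw [key3]
  simp [Multiset.coe_add, add_assoc]

lemma bigrams_single (u : List α) (a b : α)
    (ha : u.head? = some a) (hb : u.getLast? = some b) :
    bigrams u = ((↑[((none : Option α), some a)]
      + ↑(zp (u.map some))
      + ↑[(some b, (none : Option α))]) : Multiset (Option α × Option α)) := by
  have h := bigrams_decomp [] [] u a b ha hb
  simpa [zp] using h

lemma zp_map_some_fst (l : List α) (p : Option α × Option α)
    (hp : p ∈ zp (l.map some)) : p.1.isSome := by
  have := List.of_mem_zip hp
  obtain ⟨x, -, hx⟩ := List.mem_map.mp this.1
  simp [← hx]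

lemma zp_map_some_snd (l : List α) (p : Option α × Option α)
    (hp : p ∈ zp (l.map some)) : p.2.isSome := by
  have := List.of_mem_zip hp
  have h2 : p.2 ∈ (l.map some).tail := this.2
  have : p.2 ∈ l.map some := List.mem_of_mem_tail h2
  obtain ⟨x, -, hx⟩ := List.mem_map.mp this
  simp [← hx]

lemma extract (u v : List α) (a b a' b' : α)
    (ha : u.head? = some a) (hb : u.getLast? = some b)
    (ha' : v.head? = some a') (hb' : v.getLast? = some b')
    (h : bigrams v = bigrams u) :
    a' = a ∧ b' = b ∧ ((↑(zp (v.map some)) : Multiset (Option α × Option α)) = ↑(zp (u.map some))) := by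
  rw [bigrams_single u a b ha hb, bigrams_single v a' b' ha' hb'] at h
  have hfu : Multiset.filter (fun p : Option α × Option α => p.1.isNone)
      ((zp (u.map some) : List _) : Multiset _) = 0 :=
    Multiset.filter_eq_nil.mpr (fun p hp => by
      simp [Option.isNone_iff_eq_none]
      have := zp_map_some_fst u p (by exact_mod_cast hp)
      intro hn; rw [hn] at this; simp at this)
  have hfv : Multiset.filter (fun p : Option α × Option α => p.1.isNone)
      ((zp (v.map some) : List _) : Multiset _) = 0 :=
    Multiset.filter_eq_nil.mpr (fun p hp => by
      simp [Option.isNone_iff_eq_none]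
      have := zp_map_some_fst v p (by exact_mod_cast hp)
      intro hn; rw [hn] at this; simp at this)
  have hgu : Multiset.filter (fun p : Option α × Option α => p.2.isNone)
      ((zp (u.map some) : List _) : Multiset _) = 0 :=
    Multiset.filter_eq_nil.mpr (fun p hp => by
      simp [Option.isNone_iff_eq_none]
      have := zp_map_some_snd u p (by exact_mod_cast hp)
      intro hn; rw [hn] at this; simp at this)
  have hgv : Multiset.filter (fun p : Option α × Option α => p.2.isNone)
      ((zp (v.map some) : List _) : Multiset _) = 0 :=
    Multiset.filter_eq_nil.mpr (fun p hp => by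
      simp [Option.isNone_iff_eq_none]
      have := zp_map_some_snd v p (by exact_mod_cast hp)
      intro hn; rw [hn] at this; simp at this)
  have h1 := congrArg (Multiset.filter (fun p : Option α × Option α => p.1.isNone)) h
  simp only [Multiset.filter_add, hfu, hfv] at h1
  have ha2 : a' = a := by
    simpa [Multiset.filter_singleton] using h1
  have h2 := congrArg (Multiset.filter (fun p : Option α × Option α => p.2.isNone)) h
  simp only [Multiset.filter_add, hgu, hgv] at h2
  have hb2 : b' = b := by
    simpa [Multiset.filter_singleton] using h2
  subst ha2; subst hb2
  refine ⟨rfl, rfl, ?_⟩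
  have h3 := add_right_cancel h
  exact add_left_cancel h3

end Stmt1Aux

open Stmt1Aux

/-- `L_UNIQ` is factorial: any factor of a uniquely decodable string is uniquely
decodable. -/
theorem stmt1 (w u : List α) (hw : UniqDec w) (hu : u <:+: w) : UniqDec u := by
  obtain ⟨s, t, rfl⟩ := hu
  intro v hv
  have hlen : v.length = u.length := by
    have hc := congrArg Multiset.card hv
    simp only [card_bigrams] at hc
    omega
  cases u with
  | nil =>
    exact List.length_eq_zero_iff.mp (by simpa using hlen)
  | cons a u₀ =>
    have hvne : v ≠ [] := by
      intro hvnil; rw [hvnil] at hlen; simp at hlen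
    have ha : (a :: u₀).head? = some a := rfl
    have hb : (a :: u₀).getLast? = some ((a :: u₀).getLast (by simp)) :=
      List.getLast?_eq_getLast _
    have ha' : v.head? = some (v.head hvne) := List.head?_eq_head hvne
    have hb' : v.getLast? = some (v.getLast hvne) := List.getLast?_eq_getLast _
    obtain ⟨hA, hB, hZ⟩ := extract (a :: u₀) v a ((a :: u₀).getLast (by simp))
      (v.head hvne) (v.getLast hvne) ha hb ha' hb' hv
    have hbig : bigrams (s ++ v ++ t) = bigrams (s ++ (a :: u₀) ++ t) := by
      rw [bigrams_decomp s t v a ((a :: u₀).getLast (by simp)) (hA ▸ ha') (hB ▸ hb'),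
        bigrams_decomp s t (a :: u₀) a ((a :: u₀).getLast (by simp)) ha hb, hZ]
    have := hw (s ++ v ++ t) hbig
    have h5 : s ++ v = s ++ (a :: u₀) := List.append_cancel_right this
    exact List.append_cancel_left h5
end

section
/- For any x ∈ Σ and a, b ∈ Σ \ {x}, every string in the obstruction language K_{x,a,b} = I_{x,a,b} ∩ J_{x,a,b} is not uniquely decodable; that is, K_{x,a,b} ⊆ Σ* \ L_UNIQ. -/
variable {α : Type*}

/-- Membership in `I_{x,a,b} = L(Σ* a x (Σ\{a})* b Σ*)`. -/
def Imem (x a b : α) (w : List α) : Prop :=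
  ∃ p u' s : List α, w = p ++ [a, x] ++ u' ++ [b] ++ s ∧ a ∉ u'

/-- Membership in `J_{x,a,b} = L(Σ* a (Σ\{x})* b Σ*)`. -/
def Jmem (x a b : α) (w : List α) : Prop :=
  ∃ p v' s : List α, w = p ++ [a] ++ v' ++ [b] ++ s ∧ x ∉ v'

/-- The obstruction language `K_{x,a,b} = I_{x,a,b} ∩ J_{x,a,b}`. -/
def Kmem (x a b : α) (w : List α) : Prop := Imem x a b w ∧ Jmem x a b w

section Pairs

variable {β : Type*}

/-- The list of adjacent pairs of a list. -/
def pairs (l : List β) : List (β × β) := l.zip l.tail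

lemma pairs_cons_cons (c d : β) (t : List β) :
    pairs (c :: d :: t) = (c, d) :: pairs (d :: t) := rfl

lemma pairs_split (m : β) (v : List β) : ∀ (u : List β),
    pairs (u ++ m :: v) = pairs (u ++ [m]) ++ pairs (m :: v)
  | [] => by simp [pairs]
  | [c] => by simp [pairs_cons_cons, pairs]
  | c :: d :: u => by
    have ih := pairs_split m v (d :: u)
    simp only [List.cons_append] at ih ⊢
    rw [pairs_cons_cons, pairs_cons_cons, ih, List.cons_append]

lemma pairs_block (a b : β) (A R : List β) :
    pairs (a :: (A ++ b :: R)) = pairs (a :: A ++ [b]) ++ pairs (b :: R) := by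
  have := pairs_split b R (a :: A)
  simpa using this

lemma pairs_decomp (U Q S A B : List β) (a b : β) :
    pairs (U ++ a :: (A ++ b :: (Q ++ a :: (B ++ b :: S)))) =
    pairs (U ++ [a]) ++ pairs (a :: A ++ [b]) ++ pairs (b :: Q ++ [a]) ++
      pairs (a :: B ++ [b]) ++ pairs (b :: S) := by
  rw [pairs_split a (A ++ b :: (Q ++ a :: (B ++ b :: S))) U,
      pairs_block a b A (Q ++ a :: (B ++ b :: S)),
      pairs_block b a Q (B ++ b :: S),
      pairs_block a b B S]
  simp [List.append_assoc]

lemma pairs_decomp3 (U S A B : List β) (c : β) :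
    pairs (U ++ c :: (A ++ c :: (B ++ c :: S))) =
    pairs (U ++ [c]) ++ pairs (c :: A ++ [c]) ++ pairs (c :: B ++ [c]) ++ pairs (c :: S) := by
  rw [pairs_split c (A ++ c :: (B ++ c :: S)) U,
      pairs_block c c A (B ++ c :: S),
      pairs_block c c B S]
  simp [List.append_assoc]

lemma pairs_swap (U Q S A B : List β) (a b : β) :
    ((pairs (U ++ a :: (A ++ b :: (Q ++ a :: (B ++ b :: S))))) : Multiset (β × β)) =
    ((pairs (U ++ a :: (B ++ b :: (Q ++ a :: (A ++ b :: S))))) : Multiset (β × β)) := by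
  rw [pairs_decomp U Q S A B a b, pairs_decomp U Q S B A a b]
  simp only [← Multiset.coe_add]
  abel

lemma pairs_swap3 (U S A B : List β) (c : β) :
    ((pairs (U ++ c :: (A ++ c :: (B ++ c :: S)))) : Multiset (β × β)) =
    ((pairs (U ++ c :: (B ++ c :: (A ++ c :: S)))) : Multiset (β × β)) := by
  rw [pairs_decomp3 U S A B c, pairs_decomp3 U S B A c]
  simp only [← Multiset.coe_add]
  abel

end Pairs

lemma bigrams_eq_pairs (w : List α) : bigrams w = (pairs (delim w) : Multiset _) := rfl

lemma delim_decomp (q Q s A B : List α) (a b : α) :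
    delim (q ++ a :: (A ++ b :: (Q ++ a :: (B ++ b :: s)))) =
    (none :: q.map some) ++ some a :: (A.map some ++ some b :: (Q.map some ++ some a ::
      (B.map some ++ some b :: (s.map some ++ [none])))) := by
  simp [delim]

lemma delim_decomp3 (q s A B : List α) (c : α) :
    delim (q ++ c :: (A ++ c :: (B ++ c :: s))) =
    (none :: q.map some) ++ some c :: (A.map some ++ some c :: (B.map some ++ some c ::
      (s.map some ++ [none]))) := by
  simp [delim]

lemma bigrams_swap (q Q s A B : List α) (a b : α) :
    bigrams (q ++ a :: (A ++ b :: (Q ++ a :: (B ++ b :: s)))) =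
    bigrams (q ++ a :: (B ++ b :: (Q ++ a :: (A ++ b :: s)))) := by
  rw [bigrams_eq_pairs, bigrams_eq_pairs, delim_decomp, delim_decomp]
  exact pairs_swap (none :: q.map some) (Q.map some) (s.map some ++ [none])
    (A.map some) (B.map some) (some a) (some b)

lemma bigrams_swap3 (q s A B : List α) (c : α) :
    bigrams (q ++ c :: (A ++ c :: (B ++ c :: s))) =
    bigrams (q ++ c :: (B ++ c :: (A ++ c :: s))) := by
  rw [bigrams_eq_pairs, bigrams_eq_pairs, delim_decomp3, delim_decomp3]
  exact pairs_swap3 (none :: q.map some) (s.map some ++ [none])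
    (A.map some) (B.map some) (some c)

section Splits

variable {β : Type*}

lemma first_split (b : β) : ∀ l : List β, b ∈ l → ∃ l₁ l₂, l = l₁ ++ b :: l₂ ∧ b ∉ l₁
  | [], h => absurd h (by simp)
  | c :: t, h => by
    by_cases hc : c = b
    · exact ⟨[], t, by rw [hc, List.nil_append], by simp⟩
    · have hb : b ∈ t := by
        rcases List.mem_cons.mp h with h' | h'
        · exact absurd h'.symm hc
        · exact h'
      obtain ⟨l₁, l₂, he, hn⟩ := first_split b t hb
      refine ⟨c :: l₁, l₂, by rw [he, List.cons_append], ?_⟩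
      simp only [List.mem_cons, not_or]
      exact ⟨fun h' => hc h'.symm, hn⟩

lemma last_split (a : β) : ∀ l : List β, a ∈ l → ∃ l₁ l₂, l = l₁ ++ a :: l₂ ∧ a ∉ l₂
  | [], h => absurd h (by simp)
  | c :: t, h => by
    by_cases ht : a ∈ t
    · obtain ⟨l₁, l₂, he, hn⟩ := last_split a t ht
      exact ⟨c :: l₁, l₂, by rw [he, List.cons_append], hn⟩
    · have hc : c = a := by
        rcases List.mem_cons.mp h with h' | h'
        · exact h'.symm
        · exact absurd h' ht
      exact ⟨[], t, by rw [hc, List.nil_append], ht⟩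

lemma ne_helper (x b : β) (hbx : b ≠ x) (t l B : List β) (hxB : x ∉ B) :
    x :: t ≠ B ++ b :: l := by
  cases B with
  | nil =>
    intro h
    rw [List.nil_append] at h
    injection h with h1 _
    exact hbx h1.symm
  | cons c B' =>
    intro h
    rw [List.cons_append] at h
    injection h with h1 _
    exact hxB (h1 ▸ List.mem_cons_self (a := c) (l := B'))

lemma ne_glue (x b a : β) (hbx : b ≠ x) (q t l B : List β) (hxB : x ∉ B) :
    q ++ a :: (x :: t) ≠ q ++ a :: (B ++ b :: l) := by
  intro h
  have h2 := List.append_cancel_left h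
  injection h2 with _ h3
  exact ne_helper x b hbx t l B hxB h3

end Splits

/-- The core swap construction. -/
lemma swap_witness (x a b : α) (hax : a ≠ x) (hbx : b ≠ x)
    (w p s q r u B : List α)
    (hI : w = p ++ a :: ((x :: u) ++ b :: s))
    (hJ : w = q ++ a :: (B ++ b :: r))
    (hau : a ∉ u) (hbu : b ∉ u)
    (haB : a ∉ B) (hbB : b ∉ B) (hxB : x ∉ B) :
    ∃ v, bigrams v = bigrams w ∧ v ≠ w := by
  have E : q ++ a :: (B ++ b :: r) = p ++ a :: ((x :: u) ++ b :: s) := hJ.symm.trans hI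
  rcases List.append_eq_append_iff.mp E with ⟨k, hp, h1⟩ | ⟨k, hq, h1⟩
  · -- p = q ++ k
    cases k with
    | nil =>
      rw [List.nil_append] at h1
      injection h1 with _ h2
      rw [List.cons_append] at h2
      exact absurd h2.symm (ne_helper x b hbx _ _ B hxB)
    | cons a₀ k' =>
      rw [List.cons_append] at h1
      injection h1 with ha₀ h2
      rcases List.append_eq_append_iff.mp h2 with ⟨m, hk', h3⟩ | ⟨m, hB, h3⟩
      · cases m with
        | nil =>
          rw [List.nil_append] at h3
          injection h3 with hba hr
          -- b = a, r = (x :: u) ++ b :: s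
          refine ⟨q ++ a :: ((x :: u) ++ a :: (B ++ a :: s)), ?_, ?_⟩
          · have hw : w = q ++ a :: (B ++ a :: ((x :: u) ++ a :: s)) := by
              rw [hJ, hr, hba]
            rw [hw]
            exact bigrams_swap3 q s (x :: u) B a
          · have hw : w = q ++ a :: (B ++ a :: ((x :: u) ++ a :: s)) := by
              rw [hJ, hr, hba]
            rw [hw]
            rw [List.cons_append]
            exact ne_glue x a a hax q _ _ B hxB
        | cons b₀ m' =>
          rw [List.cons_append] at h3
          injection h3 with hbb hr
          -- b = b₀, r = m' ++ a :: ((x::u) ++ b :: s)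
          refine ⟨q ++ a :: ((x :: u) ++ b :: (m' ++ a :: (B ++ b :: s))), ?_, ?_⟩
          · have hw : w = q ++ a :: (B ++ b :: (m' ++ a :: ((x :: u) ++ b :: s))) := by
              rw [hJ, hr, hbb]
            rw [hw]
            exact bigrams_swap q m' s (x :: u) B a b
          · have hw : w = q ++ a :: (B ++ b :: (m' ++ a :: ((x :: u) ++ b :: s))) := by
              rw [hJ, hr, hbb]
            rw [hw]
            rw [List.cons_append]
            exact ne_glue x b a hbx q _ _ B hxB
      · cases m with
        | nil =>
          rw [List.nil_append] at h3
          injection h3 with hba hr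
          -- b = a, r = (x :: u) ++ b :: s
          refine ⟨q ++ a :: ((x :: u) ++ a :: (B ++ a :: s)), ?_, ?_⟩
          · have hw : w = q ++ a :: (B ++ a :: ((x :: u) ++ a :: s)) := by
              rw [hJ, ← hr, ← hba]
            rw [hw]
            exact bigrams_swap3 q s (x :: u) B a
          · have hw : w = q ++ a :: (B ++ a :: ((x :: u) ++ a :: s)) := by
              rw [hJ, ← hr, ← hba]
            rw [hw]
            rw [List.cons_append]
            exact ne_glue x a a hax q _ _ B hxB
        | cons c m' =>
          rw [List.cons_append] at h3
          injection h3 with hca _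
          rw [← hca] at hB
          exact absurd (hB ▸ List.mem_append_right k' (List.mem_cons_self (a := a) (l := m'))) haB
  · -- q = p ++ k
    cases k with
    | nil =>
      rw [List.nil_append] at h1
      injection h1 with _ h2
      rw [List.cons_append] at h2
      exact absurd h2 (ne_helper x b hbx _ _ B hxB)
    | cons a₀ k' =>
      rw [List.cons_append] at h1
      injection h1 with ha₀ h2
      have h2' : (x :: u) ++ b :: s = k' ++ (a :: (B ++ b :: r)) := by simpa using h2
      clear h2
      rcases List.append_eq_append_iff.mp h2' with ⟨m, hk', h3⟩ | ⟨m, hA, h3⟩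
      · cases m with
        | nil =>
          rw [List.nil_append] at h3
          injection h3 with hba hs
          -- b = a, s = B ++ b :: r
          refine ⟨p ++ a :: (B ++ a :: ((x :: u) ++ a :: r)), ?_, ?_⟩
          · have hw : w = p ++ a :: ((x :: u) ++ a :: (B ++ a :: r)) := by
              rw [hI, hs, hba]
            rw [hw]
            exact bigrams_swap3 p r B (x :: u) a
          · have hw : w = p ++ a :: ((x :: u) ++ a :: (B ++ a :: r)) := by
              rw [hI, hs, hba]
            rw [hw]
            rw [List.cons_append]
            exact (ne_glue x a a hax p _ _ B hxB).symm
        | cons b₀ m' =>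
          rw [List.cons_append] at h3
          injection h3 with hbb hs
          -- b = b₀, s = m' ++ a :: (B ++ b :: r)
          refine ⟨p ++ a :: (B ++ b :: (m' ++ a :: ((x :: u) ++ b :: r))), ?_, ?_⟩
          · have hw : w = p ++ a :: ((x :: u) ++ b :: (m' ++ a :: (B ++ b :: r))) := by
              rw [hI, hs, hbb]
            rw [hw]
            exact bigrams_swap p m' r B (x :: u) a b
          · have hw : w = p ++ a :: ((x :: u) ++ b :: (m' ++ a :: (B ++ b :: r))) := by
              rw [hI, hs, hbb]
            rw [hw]
            rw [List.cons_append]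
            exact (ne_glue x b a hbx p _ _ B hxB).symm
      · cases m with
        | nil =>
          rw [List.nil_append] at h3
          injection h3 with hba hs
          refine ⟨p ++ a :: (B ++ a :: ((x :: u) ++ a :: r)), ?_, ?_⟩
          · have hw : w = p ++ a :: ((x :: u) ++ a :: (B ++ a :: r)) := by
              rw [hI, ← hs, ← hba]
            rw [hw]
            exact bigrams_swap3 p r B (x :: u) a
          · have hw : w = p ++ a :: ((x :: u) ++ a :: (B ++ a :: r)) := by
              rw [hI, ← hs, ← hba]
            rw [hw]
            rw [List.cons_append]
            exact (ne_glue x a a hax p _ _ B hxB).symm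
        | cons c m' =>
          rw [List.cons_append] at h3
          injection h3 with hca _
          rw [← hca] at hA
          have : a ∈ x :: u := hA ▸ List.mem_append_right k' (List.mem_cons_self (a := a) (l := m'))
          rcases List.mem_cons.mp this with h' | h'
          · exact absurd h' hax
          · exact absurd h' hau

/-- Every obstruction is not uniquely decodable: `K_{x,a,b} ⊆ Σ* \ L_UNIQ`. -/
theorem stmt2 (x a b : α) (hax : a ≠ x) (hbx : b ≠ x) (w : List α)
    (hw : Kmem x a b w) : ¬ UniqDec w := by
  obtain ⟨⟨p, u', s, hI, hau'⟩, ⟨q, v', r, hJ, hxv'⟩⟩ := hw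
  -- Shrink the I-witness: take the first b in u' ++ [b]
  have hbmem : b ∈ u' ++ [b] := List.mem_append_right u' (List.mem_cons_self (a := b) (l := []))
  obtain ⟨m₁, m₂, hm, hbm₁⟩ := first_split b (u' ++ [b]) hbmem
  have ham₁ : a ∉ m₁ := by
    intro h
    have : a ∈ u' ++ [b] := hm ▸ List.mem_append_left _ h
    rcases List.mem_append.mp this with h' | h'
    · exact hau' h'
    · rw [List.mem_singleton.mp h'] at h
      exact hbm₁ h
  have hI' : w = p ++ a :: ((x :: m₁) ++ b :: (m₂ ++ s)) := by
    rw [hI]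
    calc p ++ [a, x] ++ u' ++ [b] ++ s = p ++ a :: x :: ((u' ++ [b]) ++ s) := by simp
      _ = p ++ a :: x :: (m₁ ++ b :: (m₂ ++ s)) := by rw [hm]; simp
      _ = p ++ a :: ((x :: m₁) ++ b :: (m₂ ++ s)) := by simp
  -- Shrink the J-witness: first b in v' ++ [b], then last a before it
  have hbmem' : b ∈ v' ++ [b] := List.mem_append_right v' (List.mem_cons_self (a := b) (l := []))
  obtain ⟨n₁, n₂, hn, hbn₁⟩ := first_split b (v' ++ [b]) hbmem'
  have hxn₁ : x ∉ n₁ := by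
    intro h
    have : x ∈ v' ++ [b] := hn ▸ List.mem_append_left _ h
    rcases List.mem_append.mp this with h' | h'
    · exact hxv' h'
    · exact hbx (List.mem_singleton.mp h').symm
  have hamem : a ∈ a :: n₁ := List.mem_cons_self (a := a) (l := n₁)
  obtain ⟨t₁, t₂, ht, hat₂⟩ := last_split a (a :: n₁) hamem
  have ht₂sub : ∀ y, y ∈ t₂ → y = a ∨ y ∈ n₁ := by
    intro y hy
    have : y ∈ a :: n₁ := by
      rw [ht]
      exact List.mem_append_right t₁ (List.mem_cons_of_mem a hy)
    exact List.mem_cons.mp this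
  have hxt₂ : x ∉ t₂ := by
    intro h
    rcases ht₂sub x h with h' | h'
    · exact hax h'.symm
    · exact hxn₁ h'
  have hbt₂ : b ∉ t₂ := by
    intro h
    rcases ht₂sub b h with h' | h'
    · rw [h'] at h; exact hat₂ h
    · exact hbn₁ h'
  have hJ' : w = (q ++ t₁) ++ a :: (t₂ ++ b :: (n₂ ++ r)) := by
    have key : a :: (v' ++ [b]) = t₁ ++ a :: (t₂ ++ b :: n₂) := by
      rw [hn, show a :: (n₁ ++ b :: n₂) = (a :: n₁) ++ b :: n₂ from rfl, ht]
      simp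
    rw [hJ]
    calc q ++ [a] ++ v' ++ [b] ++ r = q ++ (a :: (v' ++ [b])) ++ r := by simp
      _ = q ++ (t₁ ++ a :: (t₂ ++ b :: n₂)) ++ r := by rw [key]
      _ = (q ++ t₁) ++ a :: (t₂ ++ b :: (n₂ ++ r)) := by simp
  obtain ⟨v, hbg, hne⟩ := swap_witness x a b hax hbx w p (m₂ ++ s) (q ++ t₁) (n₂ ++ r)
    m₁ t₂ hI' hJ' ham₁ hbm₁ hat₂ hbt₂ hxt₂
  intro hu
  exact hne (hu v hbg)
end

section
/- If w ∈ Σ* contains a factor u = a·x·u'·b with u' ∈ (Σ\{a})* and a disjoint (non-overlapping) factor v = a·v'·b with v' ∈ (Σ\{x})*, where both occur in w without overlap, then w is not uniquely decodable: swapping the blocks u and v yields a string with the same bigram counts. -/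
variable {α : Type*}

def pmul {β : Type*} (l : List β) : Multiset (β × β) := (l.zip l.tail : List (β × β))

lemma pmul_chop {β : Type*} (l1 l2 : List β) (c : β) :
    pmul (l1 ++ c :: l2) = pmul (l1 ++ [c]) + pmul (c :: l2) := by
  induction l1 with
  | nil => simp [pmul]
  | cons a t ih =>
    cases t with
    | nil => simp [pmul, List.zip]
    | cons h t' =>
      have : pmul ((a :: h :: t') ++ c :: l2) =
          (a, h) ::ₘ pmul ((h :: t') ++ c :: l2) := rfl
      rw [this, ih]
      rfl

lemma pmul_swap {β : Type*} (p A m B s : List β) (c d : β) :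
    pmul (p ++ c :: (A ++ d :: (m ++ c :: (B ++ d :: s)))) =
    pmul (p ++ c :: (B ++ d :: (m ++ c :: (A ++ d :: s)))) := by
  have h : ∀ X Y : List β, pmul (p ++ c :: (X ++ d :: (m ++ c :: (Y ++ d :: s)))) =
      pmul (p ++ [c]) + (pmul (c :: X ++ [d]) + (pmul (d :: m ++ [c]) +
        (pmul (c :: Y ++ [d]) + pmul (d :: s)))) := by
    intro X Y
    rw [pmul_chop p]
    rw [show c :: (X ++ d :: (m ++ c :: (Y ++ d :: s))) =
      (c :: X) ++ d :: (m ++ c :: (Y ++ d :: s)) from rfl]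
    rw [pmul_chop (c :: X)]
    rw [show d :: (m ++ c :: (Y ++ d :: s)) = (d :: m) ++ c :: (Y ++ d :: s) from rfl]
    rw [pmul_chop (d :: m)]
    rw [show c :: (Y ++ d :: s) = (c :: Y) ++ d :: s from rfl]
    rw [pmul_chop (c :: Y)]
  rw [h, h]
  abel

/-- If `w = α·u·β·v·γ` with non-overlapping factors `u = a·x·u'·b` (`a ∉ u'`) and
`v = a·v'·b` (`x ∉ v'`), then swapping `u` and `v` gives a different string with the
same bigram counts, so `w` is not uniquely decodable. -/
theorem stmt3 (x a b : α) (hax : a ≠ x) (hbx : b ≠ x)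
    (u' v' p m s : List α) (hu' : a ∉ u') (hv' : x ∉ v') :
    bigrams (p ++ ([a] ++ v' ++ [b]) ++ m ++ ([a, x] ++ u' ++ [b]) ++ s) =
      bigrams (p ++ ([a, x] ++ u' ++ [b]) ++ m ++ ([a] ++ v' ++ [b]) ++ s) ∧
    (p ++ ([a] ++ v' ++ [b]) ++ m ++ ([a, x] ++ u' ++ [b]) ++ s) ≠
      (p ++ ([a, x] ++ u' ++ [b]) ++ m ++ ([a] ++ v' ++ [b]) ++ s) ∧
    ¬ UniqDec (p ++ ([a, x] ++ u' ++ [b]) ++ m ++ ([a] ++ v' ++ [b]) ++ s) := by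
  have hbig : bigrams (p ++ ([a] ++ v' ++ [b]) ++ m ++ ([a, x] ++ u' ++ [b]) ++ s) =
      bigrams (p ++ ([a, x] ++ u' ++ [b]) ++ m ++ ([a] ++ v' ++ [b]) ++ s) := by
    have key := pmul_swap (none :: p.map some) (v'.map some) (m.map some)
      (some x :: u'.map some) (s.map some ++ [none]) (some a) (some b)
    show pmul (delim _) = pmul (delim _)
    convert key using 2 <;> simp [delim]
  have hne : (p ++ ([a] ++ v' ++ [b]) ++ m ++ ([a, x] ++ u' ++ [b]) ++ s) ≠
      (p ++ ([a, x] ++ u' ++ [b]) ++ m ++ ([a] ++ v' ++ [b]) ++ s) := by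
    intro h
    simp only [List.append_assoc, List.cons_append, List.nil_append] at h
    have h2 := List.append_cancel_left h
    cases v' with
    | nil => simp at h2; exact hbx h2.1
    | cons c t =>
      simp at h2
      exact hv' (by simp [h2.1])
  exact ⟨hbig, hne, fun hud => hne (hud _ hbig)⟩
end

section
/- If u and v are two strings over Σ that both start with the same letter a and both end with the same letter b, then for any α, β, γ ∈ Σ*, the strings α·u·β·v·γ and α·v·β·u·γ have identical bigram count vectors (with delimiters $ prepended and appended). -/
variable {α : Type*}

/-- Multiset of adjacent pairs of a list. -/
def Zp {β : Type*} (l : List β) : Multiset (β × β) :=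
  (l.zip l.tail : List (β × β))

lemma Zp_nil {β : Type*} : Zp ([] : List β) = 0 := rfl

lemma Zp_single {β : Type*} (a : β) : Zp [a] = 0 := rfl

lemma Zp_cons_cons {β : Type*} (a b : β) (t : List β) :
    Zp (a :: b :: t) = (a, b) ::ₘ Zp (b :: t) := rfl

lemma Zp_append {β : Type*} : ∀ (l r : List β) (x y : β),
    l.getLast? = some x → r.head? = some y →
    Zp (l ++ r) = (x, y) ::ₘ (Zp l + Zp r)
  | [], _, _, _, hl, _ => by simp at hl
  | [a], r, x, y, hl, hr => by
      simp at hl; subst hl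
      cases r with
      | nil => simp at hr
      | cons c r' =>
        simp at hr; subst hr
        simp [Zp_cons_cons, Zp_single]
  | a :: b :: t, r, x, y, hl, hr => by
      have hl' : (b :: t).getLast? = some x := by simpa using hl
      have ih := Zp_append (b :: t) r x y hl' hr
      have h1 : Zp ((a :: b :: t) ++ r) = (a, b) ::ₘ Zp ((b :: t) ++ r) := rfl
      rw [h1, ih, Zp_cons_cons]
      simp [Multiset.cons_swap]

lemma Zp_swap {β : Type*} (U V M : List β) (a b : β)
    (hU1 : U.head? = some a) (hU2 : U.getLast? = some b)
    (hV1 : V.head? = some a) (hV2 : V.getLast? = some b) :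
    Zp (U ++ M ++ V) = Zp (V ++ M ++ U) := by
  cases M with
  | nil =>
    simp only [List.append_nil]
    rw [Zp_append U V b a hU2 hV1, Zp_append V U b a hV2 hU1, add_comm]
  | cons c M' =>
    have hMV : ((c :: M') ++ V).head? = some c := rfl
    have hMU : ((c :: M') ++ U).head? = some c := rfl
    obtain ⟨d, hd⟩ : ∃ d, (c :: M').getLast? = some d := by
      cases h : (c :: M').getLast? with
      | none => simp at h
      | some d => exact ⟨d, rfl⟩
    rw [List.append_assoc, List.append_assoc]
    rw [Zp_append U _ b c hU2 hMV, Zp_append V _ b c hV2 hMU]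
    rw [Zp_append (c :: M') V d a hd hV1, Zp_append (c :: M') U d a hd hU1]
    congr 1
    simp only [← Multiset.singleton_add]
    abel

/-- If `u` and `v` both start with `a` and end with `b`, then `α·u·β·v·γ` and
`α·v·β·u·γ` have identical bigram count vectors. -/
theorem stmt4 (a b : α) (u v p m s : List α)
    (hua : u.head? = some a) (hub : u.getLast? = some b)
    (hva : v.head? = some a) (hvb : v.getLast? = some b) :
    bigrams (p ++ u ++ m ++ v ++ s) = bigrams (p ++ v ++ m ++ u ++ s) := by
  have key : ∀ w : List α, bigrams w = Zp (delim w) := fun w => rfl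
  rw [key, key]
  have hd : ∀ w1 w2 : List α, delim (w1 ++ w2)
      = (none :: w1.map some) ++ (w2.map some ++ [none]) := by
    intro w1 w2; simp [delim]
  -- decompose
  have e1 : delim (p ++ u ++ m ++ v ++ s)
      = (none :: p.map some) ++ ((u.map some ++ m.map some ++ v.map some)
        ++ (s.map some ++ [none])) := by
    simp [delim]
  have e2 : delim (p ++ v ++ m ++ u ++ s)
      = (none :: p.map some) ++ ((v.map some ++ m.map some ++ u.map some)
        ++ (s.map some ++ [none])) := by
    simp [delim]
  rw [e1, e2]
  set P : List (Option α) := none :: p.map some with hP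
  set S : List (Option α) := s.map some ++ [none] with hS
  set U : List (Option α) := u.map some with hU
  set V : List (Option α) := v.map some with hV
  set M : List (Option α) := m.map some with hM
  obtain ⟨x, hx⟩ : ∃ x, P.getLast? = some x := by
    cases h : P.getLast? with
    | none => simp [hP] at h
    | some d => exact ⟨d, rfl⟩
  have hUh : U.head? = some (some a) := by rw [hU, List.head?_map, hua]; rfl
  have hUl : U.getLast? = some (some b) := by rw [hU, List.getLast?_map, hub]; rfl
  have hVh : V.head? = some (some a) := by rw [hV, List.head?_map, hva]; rfl
  have hVl : V.getLast? = some (some b) := by rw [hV, List.getLast?_map, hvb]; rfl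
  have hUne : U ≠ [] := by intro h; rw [h] at hUh; simp at hUh
  have hVne : V ≠ [] := by intro h; rw [h] at hVh; simp at hVh
  have hSh : ∃ y, S.head? = some y := by
    cases h : S.head? with
    | none => rw [List.head?_eq_none_iff] at h; simp [hS] at h
    | some d => exact ⟨d, rfl⟩
  obtain ⟨y, hy⟩ := hSh
  have hMUVh : (U ++ M ++ V).head? = some (some a) := by
    rw [List.append_assoc, List.head?_append_of_ne_nil _ hUne]; exact hUh
  have hMVUh : (V ++ M ++ U).head? = some (some a) := by
    rw [List.append_assoc, List.head?_append_of_ne_nil _ hVne]; exact hVh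
  have hMUVl : (U ++ M ++ V).getLast? = some (some b) := by
    rw [List.getLast?_append_of_ne_nil _ hVne]; exact hVl
  have hMVUl : (V ++ M ++ U).getLast? = some (some b) := by
    rw [List.getLast?_append_of_ne_nil _ hUne]; exact hUl
  have hMUVSh : ((U ++ M ++ V) ++ S).head? = some (some a) := by
    rw [List.head?_append_of_ne_nil]
    · exact hMUVh
    · intro h; rw [h] at hMUVh; simp at hMUVh
  have hMVUSh : ((V ++ M ++ U) ++ S).head? = some (some a) := by
    rw [List.head?_append_of_ne_nil]
    · exact hMVUh
    · intro h; rw [h] at hMVUh; simp at hMVUh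
  rw [Zp_append P _ x (some a) hx hMUVSh, Zp_append P _ x (some a) hx hMVUSh]
  rw [Zp_append (U ++ M ++ V) S (some b) y hMUVl hy]
  rw [Zp_append (V ++ M ++ U) S (some b) y hMVUl hy]
  rw [Zp_swap U V M (some a) (some b) hUh hUl hVh hVl]
end

section
/- L_UNIQ = Σ* \ L_OBST: a string over Σ is uniquely decodable from its bigram counts if and only if it belongs to no obstruction language K_{x,a,b}. -/
variable {α : Type*}

/-- The language of all obstructions. -/
def LObst (α : Type*) : Language α :=
  {w | ∃ x a b : α, a ≠ x ∧ b ≠ x ∧ Kmem x a b w}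

namespace SixAux

/-- multiset of adjacent pairs -/
def P {β : Type*} (l : List β) : Multiset (β × β) := (l.zip l.tail : List (β × β))

variable {β : Type*}

@[simp] lemma P_nil : P ([] : List β) = 0 := rfl
@[simp] lemma P_single (c : β) : P [c] = 0 := rfl
lemma P_cons_cons (a b : β) (l : List β) : P (a :: b :: l) = (a, b) ::ₘ P (b :: l) := rfl

lemma P_split (l₁ : List β) (c : β) (l₂ : List β) :
    P (l₁ ++ c :: l₂) = P (l₁ ++ [c]) + P (c :: l₂) := by
  induction l₁ with
  | nil => simp
  | cons d l₁ ih =>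
    cases l₁ with
    | nil => simp [P_cons_cons]
    | cons e l₁' =>
      simp only [List.cons_append, P_cons_cons] at *
      rw [ih]
      rfl

lemma mem_P_of_split (l₁ l₂ : List β) (z₁ z₂ : β) :
    (z₁, z₂) ∈ P (l₁ ++ z₁ :: z₂ :: l₂) := by
  rw [P_split l₁ z₁ (z₂ :: l₂), P_cons_cons]
  simp

lemma mem_P {l : List β} {z₁ z₂ : β} (h : (z₁, z₂) ∈ P l) :
    ∃ l₁ l₂, l = l₁ ++ z₁ :: z₂ :: l₂ := by
  induction l with
  | nil => simp [P] at h
  | cons a l ih =>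
    cases l with
    | nil => simp [P] at h
    | cons b l' =>
      rw [P_cons_cons] at h
      rcases Multiset.mem_cons.1 h with h | h
      · obtain ⟨h1, h2⟩ := Prod.mk.injEq .. ▸ congrArg id h
        exact ⟨[], l', by simp_all⟩
      · obtain ⟨l₁, l₂, hl⟩ := ih h
        exact ⟨a :: l₁, l₂, by simp [hl]⟩



/-- edges of the walk `u ++ [$]` (no leading delimiter) -/
def E (u : List α) : Multiset (Option α × Option α) := P (u.map some ++ [none])

/-- two factorizations of one list, compared by prefix length -/
lemma two_split {l₁ l₂ m₁ m₂ : List β} (h : l₁ ++ l₂ = m₁ ++ m₂)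
    (hl : l₁.length ≤ m₁.length) : ∃ k, m₁ = l₁ ++ k ∧ l₂ = k ++ m₂ := by
  induction l₁ generalizing m₁ with
  | nil => exact ⟨m₁, rfl, h⟩
  | cons a l₁ ih =>
    cases m₁ with
    | nil => simp at hl
    | cons b m₁ =>
      simp only [List.cons_append, List.cons.injEq] at h
      obtain ⟨rfl, h2⟩ := h
      obtain ⟨k, hk1, hk2⟩ := ih h2 (by simpa using hl)
      exact ⟨k, by simp [hk1], hk2⟩

/-- first-occurrence split -/
lemma first_split {a : β} {l : List β} (h : a ∈ l) :
    ∃ l₁ l₂, l = l₁ ++ a :: l₂ ∧ a ∉ l₁ := by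
  induction l with
  | nil => simp at h
  | cons b l ih =>
    by_cases hb : a = b
    · exact ⟨[], l, by simp [hb], by simp⟩
    · obtain ⟨l₁, l₂, h1, h2⟩ := ih (by rcases List.mem_cons.1 h with h | h; exact absurd h hb; exact h)
      exact ⟨b :: l₁, l₂, by simp [h1], by simp [h2, hb]⟩

/-- last-occurrence split -/
lemma last_split {a : β} {l : List β} (h : a ∈ l) :
    ∃ l₁ l₂, l = l₁ ++ a :: l₂ ∧ a ∉ l₂ := by
  induction l with
  | nil => simp at h
  | cons b l ih =>
    by_cases hl : a ∈ l
    · obtain ⟨l₁, l₂, h1, h2⟩ := ih hl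
      exact ⟨b :: l₁, l₂, by simp [h1], h2⟩
    · have hb : a = b := by rcases List.mem_cons.1 h with h | h; exact h; exact absurd h hl
      exact ⟨[], l, by simp [hb], hl⟩

lemma map_some_split {u : List α} {L₁ L₂ : List (Option α)} {c : α}
    (h : u.map some ++ [none] = L₁ ++ some c :: L₂) :
    ∃ u₁ u₂, u = u₁ ++ c :: u₂ ∧ L₁ = u₁.map some ∧ L₂ = u₂.map some ++ [none] := by
  induction u generalizing L₁ with
  | nil =>
    cases L₁ with
    | nil => simp at h
    | cons d L₁ =>
      simp only [List.map_nil, List.nil_append, List.cons_append, List.cons.injEq] at h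
      exact absurd h.2 (by simp)
  | cons b u ih =>
    cases L₁ with
    | nil =>
      simp only [List.map_cons, List.cons_append, List.nil_append, List.cons.injEq,
        Option.some.injEq] at h
      exact ⟨[], u, by simp [h.1], rfl, h.2.symm⟩
    | cons d L₁ =>
      simp only [List.map_cons, List.cons_append, List.cons.injEq] at h
      obtain ⟨u₁, u₂, h1, h2, h3⟩ := ih h.2
      exact ⟨b :: u₁, u₂, by simp [h1], by simp [h2, ← h.1], h3⟩

lemma adj_of_mem_E {u : List α} {z₁ z₂ : α} (h : (some z₁, some z₂) ∈ E u) :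
    ∃ l₁ l₂, u = l₁ ++ z₁ :: z₂ :: l₂ := by
  obtain ⟨L₁, L₂, hL⟩ := mem_P h
  obtain ⟨u₁, u₂, h1, h2, h3⟩ := map_some_split hL
  cases u₂ with
  | nil => simp at h3
  | cons e u₂' =>
    simp only [List.map_cons, List.cons_append, List.cons.injEq, Option.some.injEq] at h3
    exact ⟨u₁, u₂', by rw [h1, h3.1]⟩

lemma mem_E_of_adj (l₁ l₂ : List α) (z₁ z₂ : α) :
    (some z₁, some z₂) ∈ E (l₁ ++ z₁ :: z₂ :: l₂) := by
  have : (l₁ ++ z₁ :: z₂ :: l₂).map some ++ [none]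
      = l₁.map some ++ (some z₁) :: (some z₂) :: (l₂.map some ++ [none]) := by simp
  rw [E, this]
  exact mem_P_of_split ..

lemma last_of_mem_E {u : List α} {z : α} (h : (some z, none) ∈ E u) :
    ∃ l₁, u = l₁ ++ [z] := by
  obtain ⟨L₁, L₂, hL⟩ := mem_P h
  obtain ⟨u₁, u₂, h1, h2, h3⟩ := map_some_split hL
  cases u₂ with
  | nil => exact ⟨u₁, by simpa using h1⟩
  | cons e u₂' => simp only [List.map_cons, List.cons_append, List.cons.injEq] at h3; exact absurd h3.1 (by simp)

lemma mem_E_last (l₁ : List α) (z : α) : (some z, none) ∈ E (l₁ ++ [z]) := by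
  have : (l₁ ++ [z]).map some ++ [none] = l₁.map some ++ (some z) :: none :: [] := by simp
  rw [E, this]
  exact mem_P_of_split ..



lemma bigrams_eq_P (w : List α) : bigrams w = P (delim w) := rfl

lemma bigrams_split (r₀ : List α) (a : α) (z : List α) :
    bigrams (r₀ ++ a :: z) = P ((none :: r₀.map some) ++ [some a]) + E (a :: z) := by
  have h1 : delim (r₀ ++ a :: z) = (none :: r₀.map some) ++ some a :: (z.map some ++ [none]) := by
    simp [delim]
  rw [bigrams_eq_P, h1, P_split]
  rfl

lemma P_glue (c : β) (X : List β) (c' : β) (Y : List β) :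
    P (c :: (X ++ c' :: Y)) = P (c :: (X ++ [c'])) + P (c' :: Y) := P_split (c :: X) c' Y

lemma P4 (c0 : β) (A : List β) (c1 : β) (B : List β) (c2 : β) (C : List β) :
    P (c0 :: (A ++ c1 :: (B ++ c2 :: C)))
      = P (c0 :: (A ++ [c1])) + P (c1 :: (B ++ [c2])) + P (c2 :: C) := by
  rw [P_glue c0 A c1 (B ++ c2 :: C), P_glue c1 B c2 C, ← add_assoc]

lemma P5 (c0 : β) (A : List β) (c1 : β) (B : List β) (c2 : β) (C : List β) (c3 : β) (D : List β) :
    P (c0 :: (A ++ c1 :: (B ++ c2 :: (C ++ c3 :: D))))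
      = P (c0 :: (A ++ [c1])) + P (c1 :: (B ++ [c2])) + P (c2 :: (C ++ [c3])) + P (c3 :: D) := by
  rw [P_glue c0 A c1 (B ++ c2 :: (C ++ c3 :: D)), P_glue c1 B c2 (C ++ c3 :: D),
    P_glue c2 C c3 D, ← add_assoc, ← add_assoc]

lemma E_swap3 (a : α) (L M S : List α) :
    E (a :: (L ++ a :: (M ++ a :: S))) = E (a :: (M ++ a :: (L ++ a :: S))) := by
  have h : ∀ A B : List α, E (a :: (A ++ a :: (B ++ a :: S)))
      = P ((some a) :: (A.map some ++ [some a])) + P ((some a) :: (B.map some ++ [some a]))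
        + P ((some a) :: (S.map some ++ [none])) := by
    intro A B
    have h2 : (a :: (A ++ a :: (B ++ a :: S))).map some ++ [none]
        = (some a) :: (A.map some ++ (some a) :: (B.map some ++ (some a) :: (S.map some ++ [none]))) := by
      simp
    rw [E, h2, P4 (some a) (A.map some) (some a) (B.map some) (some a) (S.map some ++ [none])]
  rw [h, h, add_comm (P ((some a) :: (L.map some ++ [some a]))) (P ((some a) :: (M.map some ++ [some a])))]

lemma E_swap4 (a b : α) (L M L' S : List α) :
    E (a :: (L ++ b :: (M ++ a :: (L' ++ b :: S))))
      = E (a :: (L' ++ b :: (M ++ a :: (L ++ b :: S)))) := by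
  have h : ∀ A B : List α, E (a :: (A ++ b :: (M ++ a :: (B ++ b :: S))))
      = P ((some a) :: (A.map some ++ [some b])) + P ((some b) :: (M.map some ++ [some a]))
        + P ((some a) :: (B.map some ++ [some b])) + P ((some b) :: (S.map some ++ [none])) := by
    intro A B
    have h2 : (a :: (A ++ b :: (M ++ a :: (B ++ b :: S)))).map some ++ [none]
        = (some a) :: (A.map some ++ (some b) :: (M.map some ++ (some a) :: (B.map some ++ (some b) :: (S.map some ++ [none])))) := by
      simp
    rw [E, h2, P5 (some a) (A.map some) (some b) (M.map some) (some a) (B.map some) (some b) (S.map some ++ [none])]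
  rw [h, h]
  abel

lemma neq_head {x b : α} {v' Y Z : List α} (hx : x ∉ v') (hb : b ≠ x) :
    v' ++ [b] ++ Y ≠ x :: Z := by
  cases v' with
  | nil => simp only [List.nil_append, List.cons_append, ne_eq, List.cons.injEq, not_and]
           intro h; exact absurd h hb
  | cons c v'' =>
    simp only [List.cons_append, ne_eq, List.cons.injEq, not_and]
    intro h; exact absurd (h ▸ (List.mem_cons_self : c ∈ c :: v'')) hx

lemma card_bigrams (w : List α) : Multiset.card (bigrams w) = w.length + 1 := by
  simp [bigrams, delim]

lemma len_eq {v w : List α} (h : bigrams v = bigrams w) : v.length = w.length := by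
  have := congrArg Multiset.card h
  rw [card_bigrams, card_bigrams] at this
  omega

lemma none_succ_nil {u : List α} {M : List (Option α)} {L₁ : List (Option α)}
    (h : u.map some ++ [none] = L₁ ++ none :: M) : M = [] := by
  induction u generalizing L₁ with
  | nil =>
    cases L₁ with
    | nil => simpa using h.symm
    | cons d L₁ =>
      simp only [List.map_nil, List.nil_append, List.cons_append, List.cons.injEq] at h
      exact absurd h.2 (by simp)
  | cons b u ih =>
    cases L₁ with
    | nil =>
      simp only [List.map_cons, List.cons_append, List.nil_append, List.cons.injEq] at h
      exact absurd h.1 (by simp)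
    | cons d L₁ =>
      simp only [List.map_cons, List.cons_append, List.cons.injEq] at h
      exact ih h.2

lemma none_not_src {u : List α} {z : Option α} : (none, z) ∉ E u := by
  intro h
  obtain ⟨L₁, L₂, hL⟩ := mem_P h
  have := none_succ_nil (M := z :: L₂) hL
  simp at this

lemma bigrams_cons (c : α) (u' : List α) :
    bigrams (c :: u') = (none, some c) ::ₘ E (c :: u') := rfl

lemma head_eq {v w : List α} (h : bigrams v = bigrams w) : v.head? = w.head? := by
  cases v with
  | nil =>
    cases w with
    | nil => rfl
    | cons c w' => exact absurd (len_eq h) (by simp)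
  | cons cv v' =>
    cases w with
    | nil => exact absurd (len_eq h) (by simp)
    | cons cw w' =>
      have hm : ((none : Option α), some cv) ∈ bigrams (cw :: w') := by
        rw [← h, bigrams_cons]; exact Multiset.mem_cons_self _ _
      rw [bigrams_cons] at hm
      rcases Multiset.mem_cons.1 hm with hm | hm
      · obtain ⟨h1, h2⟩ := Prod.mk.injEq .. ▸ congrArg id hm
        simpa using h2
      · exact absurd hm none_not_src

lemma branch {v w : List α} (hne : v ≠ w) (hlen : v.length = w.length) :
    ∃ (r : List α) (c₁ c₂ : α) (s t : List α),
      w = r ++ c₁ :: s ∧ v = r ++ c₂ :: t ∧ c₁ ≠ c₂ := by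
  induction w generalizing v with
  | nil =>
    cases v with
    | nil => exact absurd rfl hne
    | cons c v' => simp at hlen
  | cons cw w' ih =>
    cases v with
    | nil => simp at hlen
    | cons cv v' =>
      by_cases hc : cv = cw
      · subst hc
        have hne' : v' ≠ w' := fun hh => hne (by rw [hh])
        obtain ⟨r, c₁, c₂, s, t, h1, h2, h3⟩ := ih hne' (by simpa using hlen)
        exact ⟨cv :: r, c₁, c₂, s, t, by simp [h1], by simp [h2], h3⟩
      · exact ⟨[], cw, cv, w', v', rfl, rfl, fun hh => hc hh.symm⟩

lemma chain_confine {Q : α → Prop} :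
    ∀ (g : List α) (z0 : α), Q z0 →
      (∀ g₁ z z' g₂, z0 :: g = g₁ ++ z :: z' :: g₂ → Q z → Q z') →
      ∀ z ∈ z0 :: g, Q z := by
  intro g
  induction g with
  | nil =>
    intro z0 h _ z hz
    rcases List.mem_cons.1 hz with rfl | hz
    · exact h
    · simp at hz
  | cons z1 g ih =>
    intro z0 h hstep z hz
    have hq1 : Q z1 := hstep [] z0 z1 g rfl h
    rcases List.mem_cons.1 hz with rfl | hz
    · exact h
    · exact ih z1 hq1 (fun g₁ z z' g₂ hg hQz => hstep (z0 :: g₁) z z' g₂ (by simp [hg]) hQz) z hz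


lemma bigrams_swap4 (q : List α) (a b : α) (L M L' S : List α) :
    bigrams (q ++ a :: (L ++ b :: (M ++ a :: (L' ++ b :: S))))
      = bigrams (q ++ a :: (L' ++ b :: (M ++ a :: (L ++ b :: S)))) := by
  rw [bigrams_split, bigrams_split, E_swap4]

lemma bigrams_swap3 (q : List α) (a : α) (L M S : List α) :
    bigrams (q ++ a :: (L ++ a :: (M ++ a :: S)))
      = bigrams (q ++ a :: (M ++ a :: (L ++ a :: S))) := by
  rw [bigrams_split, bigrams_split, E_swap3]

lemma A1pair {x b : α} {v' : List α} (q : List α) (a : α) (u' M S : List α)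
    (hbx : b ≠ x) (hv : x ∉ v') :
    bigrams (q ++ a :: ((x :: u') ++ b :: (M ++ a :: (v' ++ b :: S))))
      = bigrams (q ++ a :: (v' ++ b :: (M ++ a :: ((x :: u') ++ b :: S))))
    ∧ q ++ a :: ((x :: u') ++ b :: (M ++ a :: (v' ++ b :: S)))
      ≠ q ++ a :: (v' ++ b :: (M ++ a :: ((x :: u') ++ b :: S))) := by
  constructor
  · exact bigrams_swap4 q a b (x :: u') M v' S
  · intro hEq
    have h1 := List.append_cancel_left hEq
    have h2 := (List.cons.inj h1).2
    exact neq_head hv hbx (by simpa using h2.symm)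

lemma A2pair {x : α} {v' : List α} (q : List α) (a : α) (u' S : List α)
    (hax : a ≠ x) (hv : x ∉ v') :
    bigrams (q ++ a :: ((x :: u') ++ a :: (v' ++ a :: S)))
      = bigrams (q ++ a :: (v' ++ a :: ((x :: u') ++ a :: S)))
    ∧ q ++ a :: ((x :: u') ++ a :: (v' ++ a :: S))
      ≠ q ++ a :: (v' ++ a :: ((x :: u') ++ a :: S)) := by
  constructor
  · exact bigrams_swap3 q a (x :: u') v' S
  · intro hEq
    have h1 := List.append_cancel_left hEq
    have h2 := (List.cons.inj h1).2
    exact neq_head hv (Ne.symm (fun h => hax h.symm)) (by simpa using h2.symm)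

lemma dirA {x a b : α} (hax : a ≠ x) (hbx : b ≠ x) {w : List α} (hK : Kmem x a b w) :
    ∃ v : List α, bigrams v = bigrams w ∧ v ≠ w := by
  obtain ⟨⟨p, u', s₀, hw1, hu⟩, ⟨q, v', t₀, hw2, hv⟩⟩ := hK
  have hw1' : w = p ++ a :: x :: (u' ++ b :: s₀) := by simpa [List.append_assoc] using hw1
  have hw2' : w = q ++ a :: (v' ++ b :: t₀) := by simpa [List.append_assoc] using hw2
  rcases lt_trichotomy q.length p.length with hlt | heq | hgt
  · -- J's a strictly before I's a
    have hn : (q ++ [a]) ++ (v' ++ b :: t₀) = p ++ (a :: x :: (u' ++ b :: s₀)) := by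
      simpa [List.append_assoc] using hw2'.symm.trans hw1'
    obtain ⟨ρ, hp, hrest⟩ := two_split hn (by simp; omega)
    by_cases hvr : v'.length ≤ ρ.length
    · obtain ⟨m, hρ, hbt⟩ := two_split hrest hvr
      cases m with
      | nil =>
        obtain ⟨hba, ht₀⟩ := List.cons.inj hbt
        have hwform : w = q ++ a :: (v' ++ a :: ((x :: u') ++ a :: s₀)) := by
          rw [hw2', ht₀, hba]; simp
        rw [hwform]
        obtain ⟨he, hne⟩ := A2pair q a u' s₀ hax hv
        exact ⟨_, he, hne⟩
      | cons c m' =>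
        obtain ⟨hbc, ht₀⟩ := List.cons.inj hbt
        subst hbc
        have hwform : w = q ++ a :: (v' ++ b :: (m' ++ a :: ((x :: u') ++ b :: s₀))) := by
          rw [hw2', ht₀]; simp
        rw [hwform]
        obtain ⟨he, hne⟩ := A1pair q a u' m' s₀ hbx hv
        exact ⟨_, he, hne⟩
    · push_neg at hvr
      obtain ⟨v₂, hv2, hax2⟩ := two_split hrest.symm (le_of_lt hvr)
      cases v₂ with
      | nil => rw [hv2] at hvr; simp at hvr
      | cons c v₂' =>
        obtain ⟨hac, h3⟩ := List.cons.inj hax2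
        subst hac
        cases v₂' with
        | nil => exact absurd (List.cons.inj h3).1 (Ne.symm hbx)
        | cons d v₂'' =>
          have hdx : d = x := ((List.cons.inj h3).1).symm
          exact absurd (by rw [hv2, hdx]; simp : x ∈ v') hv
  · -- same position: impossible
    have hn : p ++ (a :: x :: (u' ++ b :: s₀)) = q ++ (a :: (v' ++ b :: t₀)) := by
      simpa [List.append_assoc] using hw1'.symm.trans hw2'
    obtain ⟨k, hq, hrest⟩ := two_split hn (le_of_eq heq.symm)
    have hk : k = [] := by
      have h5 := congrArg List.length hq
      simp only [List.length_append] at h5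
      rw [← List.length_eq_zero_iff]
      omega
    subst hk
    simp only [List.nil_append] at hrest
    have h2 := (List.cons.inj hrest).2
    exact absurd (by simpa using h2.symm) (neq_head hv hbx)
  · -- I's a strictly before J's a
    have hn : (p ++ [a]) ++ ((x :: u') ++ (b :: s₀)) = q ++ (a :: (v' ++ b :: t₀)) := by
      simpa [List.append_assoc] using hw1'.symm.trans hw2'
    obtain ⟨ρ, hq, hrest⟩ := two_split hn (by simp; omega)
    by_cases hc : ρ.length ≤ (x :: u').length
    · obtain ⟨k, hxu, hk2⟩ := two_split hrest.symm hc
      cases k with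
      | nil =>
        obtain ⟨hab, hs₀⟩ := List.cons.inj hk2
        have hwform : w = p ++ a :: ((x :: u') ++ a :: (v' ++ a :: t₀)) := by
          rw [hw1', ← hs₀, ← hab]; simp
        rw [hwform]
        obtain ⟨he, hne⟩ := A2pair p a u' t₀ hax hv
        exact ⟨_, he.symm, Ne.symm hne⟩
      | cons c k' =>
        have hac : a = c := (List.cons.inj hk2).1
        subst hac
        exact absurd (by rw [hxu]; simp : a ∈ x :: u')
          (by simp [hax, hu] : a ∉ x :: u')
    · push_neg at hc
      obtain ⟨ζ, hρ, hbs⟩ := two_split hrest (le_of_lt hc)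
      cases ζ with
      | nil => rw [hρ] at hc; simp at hc
      | cons c ζ' =>
        obtain ⟨hbc, hs₀⟩ := List.cons.inj hbs
        subst hbc
        have hwform : w = p ++ a :: ((x :: u') ++ b :: (ζ' ++ a :: (v' ++ b :: t₀))) := by
          rw [hw1', hs₀]; simp
        rw [hwform]
        obtain ⟨he, hne⟩ := A1pair p a u' ζ' t₀ hbx hv
        exact ⟨_, he.symm, Ne.symm hne⟩


open Classical in
noncomputable def cpl : List α → List α → ℕ
  | a :: as, b :: bs => if a = b then cpl as bs + 1 else 0
  | _, _ => 0

@[simp] lemma cpl_nil_left (m : List α) : cpl ([] : List α) m = 0 := by cases m <;> rfl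

lemma cpl_cons_eq (a : α) (l m : List α) : cpl (a :: l) (a :: m) = cpl l m + 1 := by
  simp [cpl]

lemma cpl_cons_ne {a b : α} (h : a ≠ b) (l m : List α) : cpl (a :: l) (b :: m) = 0 := by
  simp [cpl, h]

lemma cpl_prefix (p l m : List α) : cpl (p ++ l) (p ++ m) = p.length + cpl l m := by
  induction p with
  | nil => simp
  | cons c p ih => simp [cpl_cons_eq, ih]; omega

lemma mem_E_getLast {u : List α} (L : α) (l₁ : List α) (h : u = l₁ ++ [L]) :
    (some L, none) ∈ E u := h ▸ mem_E_last l₁ L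


/-- Direction B: a non-trivial bigram-equivalent string forces an obstruction. -/
lemma dirB_aux (w : List α) : ∀ n : ℕ, ∀ v : List α,
    bigrams v = bigrams w → v ≠ w → w.length - cpl v w ≤ n → w ∈ LObst α := by
  intro n
  induction n using Nat.strong_induction_on with
  | _ n IH =>
  intro v hbvw hne hmu
  -- branch decomposition
  obtain ⟨r, x, y, s, t, hw0, hv0, hxy0⟩ := branch hne (len_eq hbvw)
  have hxy : x ≠ y := hxy0
  -- r is nonempty
  rcases List.eq_nil_or_concat r with rfl | ⟨r₀, a, rfl⟩
  · exfalso
    have h := head_eq hbvw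
    rw [hw0, hv0] at h
    simp at h
    exact hxy h.symm
  have hw : w = r₀ ++ a :: (x :: s) := by simpa using hw0
  have hv : v = r₀ ++ a :: (y :: t) := by simpa using hv0
  -- suffix edge multiset equality
  have hE : E (a :: x :: s) = E (a :: y :: t) := by
    have h1 := bigrams_split r₀ a (x :: s)
    have h2 := bigrams_split r₀ a (y :: t)
    rw [← hw] at h1; rw [← hv] at h2
    have h3 : P ((none :: r₀.map some) ++ [some a]) + E (a :: (x :: s))
        = P ((none :: r₀.map some) ++ [some a]) + E (a :: (y :: t)) := by
      rw [← h1, ← h2, hbvw]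
    exact (add_left_cancel h3).symm ▸ rfl
  -- the (a,y) adjacency inside w's suffix
  have hay : (some a, some y) ∈ E (a :: x :: s) := by
    rw [hE]; exact mem_E_of_adj [] t a y
  obtain ⟨l₁, ω₀, hu⟩ := adj_of_mem_E hay
  -- l₁ is nonempty, starting with a
  have hl₁ : ∃ l₁', l₁ = a :: l₁' := by
    cases l₁ with
    | nil => exact absurd (List.cons.inj hu).2 (by intro hh; exact hxy (List.cons.inj hh).1)
    | cons c l₁' => exact ⟨l₁', by rw [(List.cons.inj hu).1]⟩
  -- case y = a
  by_cases hya : y = a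
  · subst hya
    obtain ⟨l₁', rfl⟩ := hl₁
    have hxs : x :: s = l₁' ++ y :: y :: ω₀ := (List.cons.inj hu).2
    have hmem : y ∈ x :: s := by rw [hxs]; simp
    obtain ⟨F, ρF, hF, haF⟩ := first_split hmem
    obtain ⟨F', hFx⟩ : ∃ F', F = x :: F' := by
      cases F with
      | nil => exact absurd (List.cons.inj hF).1 hxy
      | cons f F' =>
        have hxf := (List.cons.inj hF).1
        exact ⟨F', by rw [hxf]⟩
    refine ⟨x, y, y, Ne.symm hxy, Ne.symm hxy,
      ⟨r₀, F', ρF, ?_, fun hc => haF (by simp [hFx, hc])⟩,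
      ⟨r₀ ++ y :: l₁', [], ω₀, ?_, by simp⟩⟩
    · rw [hw, hF, hFx]; simp
    · rw [hw, hu]; simp
  -- case x = a
  by_cases hxa : x = a
  · subst hxa
    by_cases hcl : ∃ δ Z ε, x :: x :: s = δ ++ [x] ++ Z ++ [x] ++ ε ∧ x ∉ Z ∧ Z ≠ []
    · obtain ⟨δ, Z, ε, hd, haZ, hZne⟩ := hcl
      cases Z with
      | nil => exact absurd rfl hZne
      | cons m Z₁ =>
        have ham : x ≠ m := fun h => haZ (by simp [h])
        refine ⟨m, x, x, ham, ham,
          ⟨r₀ ++ δ, Z₁, ε, ?_, fun hc => haZ (by simp [hc])⟩,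
          ⟨r₀, [], s, ?_, by simp⟩⟩
        · rw [hw, hd]; simp
        · rw [hw]; simp
    · exfalso
      have haa : (some x, some x) ∈ E (x :: y :: t) := by
        rw [← hE]; exact mem_E_of_adj [] s x x
      obtain ⟨m₁, m₂, hm⟩ := adj_of_mem_E haa
      have hmem_a : x ∈ y :: t := by
        cases m₁ with
        | nil => rw [(List.cons.inj hm).2]; simp
        | cons c m₁' => rw [(List.cons.inj hm).2]; simp
      have hstep : ∀ g₁ z z' g₂, y :: t = g₁ ++ z :: z' :: g₂ → z ≠ x → z' ≠ x := by
        intro g₁ z z' g₂ hg hz hz'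
        have hadj : (some z, some x) ∈ E (x :: x :: s) := by
          rw [hE]
          have hform : x :: y :: t = (x :: g₁) ++ z :: x :: g₂ := by rw [hg, hz']; simp
          rw [hform]; exact mem_E_of_adj _ _ _ _
        obtain ⟨n₁, n₂, hn⟩ := adj_of_mem_E hadj
        have hn₁ : x ∈ n₁ := by
          cases n₁ with
          | nil => exact absurd (List.cons.inj hn).1.symm hz
          | cons c n₁' => rw [(List.cons.inj hn).1]; simp
        obtain ⟨g₁', g₂', hn₁d, hag₂'⟩ := last_split hn₁
        apply hcl
        refine ⟨g₁', g₂' ++ [z], n₂, ?_, ?_, by simp⟩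
        · rw [hn, hn₁d]; simp
        · simp only [List.mem_append, List.mem_singleton, not_or]
          exact ⟨hag₂', fun h => hz h.symm⟩
      have hall := chain_confine (Q := fun z => z ≠ x) t y (fun h => hya h) hstep
      exact (hall x hmem_a) rfl
  -- now x ≠ a, y ≠ a
  -- [T1] a closed block avoiding x
  by_cases hT1 : ∃ δ Z ε, a :: x :: s = δ ++ [a] ++ Z ++ [a] ++ ε ∧ a ∉ Z ∧ x ∉ Z
  · obtain ⟨δ, Z, ε, hd, haZ, hxZ⟩ := hT1
    obtain ⟨l₁', rfl⟩ := hl₁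
    have hxs : x :: s = l₁' ++ a :: y :: ω₀ := (List.cons.inj hu).2
    have hmem : a ∈ x :: s := by rw [hxs]; simp
    obtain ⟨F, ρF, hF, haF⟩ := first_split hmem
    obtain ⟨F', hFx⟩ : ∃ F', F = x :: F' := by
      cases F with
      | nil => exact absurd (List.cons.inj hF).1 hxa
      | cons f F' =>
        have hxf := (List.cons.inj hF).1
        exact ⟨F', by rw [hxf]⟩
    refine ⟨x, a, a, Ne.symm hxa, Ne.symm hxa,
      ⟨r₀, F', ρF, ?_, fun hc => haF (by simp [hFx, hc])⟩,
      ⟨r₀ ++ δ, Z, ε, ?_, hxZ⟩⟩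
    · rw [hw, hF, hFx]; simp
    · rw [hw, hd]; simp
  have hT2 : ∀ δ Z ε, a :: x :: s = δ ++ [a] ++ Z ++ [a] ++ ε → a ∉ Z → x ∈ Z :=
    fun δ Z ε h1 h2 => Classical.byContradiction fun h3 => hT1 ⟨δ, Z, ε, h1, h2, h3⟩
  -- [Tret] a returning (a,y) adjacency
  by_cases hret : ∃ δ E', a :: x :: s = δ ++ a :: y :: E' ∧ a ∈ E'
  · obtain ⟨δ, E', hd, haE⟩ := hret
    obtain ⟨ε₁, ε₂, hE', haε₁⟩ := first_split haE
    have hxε : x ∈ ε₁ := by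
      have h2 := hT2 δ (y :: ε₁) ε₂ (by rw [hd, hE']; simp)
        (by simp only [List.mem_cons, not_or]; exact ⟨fun h => hya h.symm, haε₁⟩)
      rcases List.mem_cons.1 h2 with h | h
      · exact absurd h hxy
      · exact h
    obtain ⟨κ, κ', hκ⟩ := List.append_of_mem hxε
    refine ⟨y, a, x, Ne.symm hya, hxy,
      ⟨r₀ ++ δ, κ, κ' ++ [a] ++ ε₂, ?_, fun hc => haε₁ (by rw [hκ]; simp [hc])⟩,
      ⟨r₀, [], s, ?_, by simp⟩⟩
    · rw [hw, hd, hE', hκ]; simp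
    · rw [hw]; simp
  have hnoret : ∀ δ E', a :: x :: s = δ ++ a :: y :: E' → a ∉ E' :=
    fun δ E' h1 => fun hmem => hret ⟨δ, E', h1, hmem⟩
  have hω : a ∉ ω₀ := hnoret l₁ ω₀ hu
  -- [Tb] y in a closed block
  by_cases hyblk : ∃ δ Z ε, a :: x :: s = δ ++ [a] ++ Z ++ [a] ++ ε ∧ a ∉ Z ∧ y ∈ Z
  · obtain ⟨δ, Z, ε, hd, haZ, hyZ⟩ := hyblk
    cases Z with
    | nil => simp at hyZ
    | cons m Z₁ =>
      have ham : a ≠ m := fun h => haZ (by simp [h])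
      by_cases hym : y = m
      · exact absurd (by simp : a ∈ Z₁ ++ a :: ε)
          (hnoret δ (Z₁ ++ a :: ε) (by rw [hd, hym]; simp))
      · have hyZ₁ : y ∈ Z₁ := by
          rcases List.mem_cons.1 hyZ with h | h
          · exact absurd h hym
          · exact h
        obtain ⟨κ, κ', hκ⟩ := List.append_of_mem hyZ₁
        obtain ⟨l₁', rfl⟩ := hl₁
        refine ⟨m, a, y, ham, hym,
          ⟨r₀ ++ δ, κ, κ' ++ [a] ++ ε, ?_, fun hc => haZ (by rw [hκ]; simp [hc])⟩,
          ⟨r₀ ++ a :: l₁', [], ω₀, ?_, by simp⟩⟩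
        · rw [hw, hd, hκ]; simp
        · rw [hw, hu]; simp
  have hnyb : ∀ δ Z ε, a :: x :: s = δ ++ [a] ++ Z ++ [a] ++ ε → a ∉ Z → y ∉ Z :=
    fun δ Z ε h1 h2 => fun hmem => hyblk ⟨δ, Z, ε, h1, h2, hmem⟩
  -- [Tc] x in the tail
  by_cases hxt : x ∈ ω₀
  · obtain ⟨κ, κ', hκ⟩ := List.append_of_mem hxt
    obtain ⟨l₁', rfl⟩ := hl₁
    refine ⟨y, a, x, Ne.symm hya, hxy,
      ⟨r₀ ++ a :: l₁', κ, κ', ?_, fun hc => hω (by rw [hκ]; simp [hc])⟩,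
      ⟨r₀, [], s, ?_, by simp⟩⟩
    · rw [hw, hu, hκ]; simp
    · rw [hw]; simp
  -- [T25] x strictly inside a closed block with another exit
  by_cases hxint : ∃ δ m Z₁ ε, a :: x :: s = δ ++ [a] ++ (m :: Z₁) ++ [a] ++ ε ∧
      a ∉ m :: Z₁ ∧ x ∈ Z₁ ∧ m ≠ x
  · obtain ⟨δ, m, Z₁, ε, hd, haZ, hxZ₁, hmx⟩ := hxint
    obtain ⟨κ, κ', hκ⟩ := List.append_of_mem hxZ₁
    refine ⟨m, a, x, fun h => haZ (by simp [h]), Ne.symm hmx,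
      ⟨r₀ ++ δ, κ, κ' ++ [a] ++ ε, ?_, fun hc => haZ (by rw [hκ]; simp [hc])⟩,
      ⟨r₀, [], s, ?_, by simp⟩⟩
    · rw [hw, hd, hκ]; simp
    · rw [hw]; simp
  have hCBX : ∀ δ Z ε, a :: x :: s = δ ++ [a] ++ Z ++ [a] ++ ε → a ∉ Z →
      ∃ Z₁, Z = x :: Z₁ := by
    intro δ Z ε h1 h2
    have hxZ := hT2 δ Z ε h1 h2
    cases Z with
    | nil => simp at hxZ
    | cons m Z₁ =>
      by_cases hmx : m = x
      · exact ⟨Z₁, by rw [hmx]⟩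
      · rcases List.mem_cons.1 hxZ with h | h
        · exact absurd h.symm hmx
        · exact absurd ⟨δ, m, Z₁, ε, h1, h2, h, hmx⟩ hxint
  -- [Ti] a closed-block interior vertex also in the tail
  by_cases hovl : ∃ δ Z₁ ε c, a :: x :: s = δ ++ [a] ++ (x :: Z₁) ++ [a] ++ ε ∧
      a ∉ x :: Z₁ ∧ c ∈ Z₁ ∧ c ∈ ω₀
  · obtain ⟨δ, Z₁, ε, c, hd, haZ, hcZ, hcω⟩ := hovl
    obtain ⟨κI, κI', hκI⟩ := List.append_of_mem hcZ
    obtain ⟨κJ, κJ', hκJ⟩ := List.append_of_mem hcω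
    obtain ⟨l₁', rfl⟩ := hl₁
    have hcx : c ≠ x := fun h => hxt (h ▸ hcω)
    refine ⟨x, a, c, Ne.symm hxa, hcx,
      ⟨r₀ ++ δ, κI, κI' ++ [a] ++ ε, ?_, fun hc => haZ (by rw [hκI]; simp [hc])⟩,
      ⟨r₀ ++ a :: l₁', y :: κJ, κJ', ?_, ?_⟩⟩
    · rw [hw, hd, hκI]; simp
    · rw [hw, hu, hκJ]; simp
    · simp only [List.mem_cons, not_or]
      exact ⟨hxy, fun h => hxt (by rw [hκJ]; simp [h])⟩
  -- DELTA: prefix letters other than a avoid the tail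
  have hDELTA : ∀ e ∈ l₁, e ≠ a → e ∉ y :: ω₀ := by
    intro e he hea
    obtain ⟨d₁, d₂, hd₁⟩ := List.append_of_mem he
    have had₁ : a ∈ d₁ := by
      cases d₁ with
      | nil =>
        exfalso; apply hea
        have h3 : a :: x :: s = e :: (d₂ ++ a :: y :: ω₀) := by rw [hu, hd₁]; simp
        exact (List.cons.inj h3).1.symm
      | cons c d₁' =>
        have h3 : a :: x :: s = c :: (d₁' ++ e :: d₂ ++ a :: y :: ω₀) := by rw [hu, hd₁]; simp
        rw [← (List.cons.inj h3).1]; simp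
    obtain ⟨g₁, g₂, hg, hag₂⟩ := last_split had₁
    have hmem2 : a ∈ d₂ ++ a :: y :: ω₀ := by simp
    obtain ⟨h₁, h₂, hh, hah₁⟩ := first_split hmem2
    have hform : a :: x :: s = g₁ ++ [a] ++ (g₂ ++ e :: h₁) ++ [a] ++ h₂ := by
      rw [hu, hd₁, hg]
      simp only [List.append_assoc, List.cons_append, List.nil_append]
      rw [hh]
    have haZ2 : a ∉ g₂ ++ e :: h₁ := by
      simp only [List.mem_append, List.mem_cons, not_or]
      exact ⟨hag₂, fun h => hea h.symm, hah₁⟩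
    obtain ⟨Z₁', hZ₁'⟩ := hCBX g₁ (g₂ ++ e :: h₁) h₂ hform haZ2
    have heZ : e ∈ x :: Z₁' := by rw [← hZ₁']; simp
    rcases List.mem_cons.1 heZ with h | h
    · rw [h]
      simp only [List.mem_cons, not_or]
      exact ⟨hxy, hxt⟩
    · intro hmem3
      rcases List.mem_cons.1 hmem3 with h2 | h2
      · exact hnyb g₁ (g₂ ++ e :: h₁) h₂ hform haZ2 (by rw [← h2]; simp)
      · exact hovl ⟨g₁, Z₁', h₂, e, by rw [hform, hZ₁'], by rw [← hZ₁']; exact haZ2, h, h2⟩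
  -- v-side split on the (a,x) adjacency
  have hvx : (some a, some x) ∈ E (a :: y :: t) := by
    rw [← hE]; exact mem_E_of_adj [] s a x
  obtain ⟨m₁, m₂, hv1⟩ := adj_of_mem_E hvx
  have hm₁ : ∃ m₁', m₁ = a :: m₁' := by
    cases m₁ with
    | nil => exact absurd (List.cons.inj hv1).2 (by intro hh; exact hxy (List.cons.inj hh).1.symm)
    | cons c m₁' => exact ⟨m₁', by rw [(List.cons.inj hv1).1]⟩
  obtain ⟨m₁', rfl⟩ := hm₁
  have hv2 : y :: t = m₁' ++ a :: x :: m₂ := (List.cons.inj hv1).2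
  by_cases hva : a ∈ m₂
  · -- CASE 1 : fronting + induction hypothesis
    obtain ⟨χ, ε₂', hχ, haχ⟩ := first_split hva
    obtain ⟨m₁'', hm₁'⟩ : ∃ m₁'', m₁' = y :: m₁'' := by
      cases m₁' with
      | nil => exact absurd (List.cons.inj hv2).1 hya
      | cons c m₁'' =>
        have hyc := (List.cons.inj hv2).1
        exact ⟨m₁'', by rw [hyc]⟩
    have hE2 : E (a :: x :: (χ ++ a :: (m₁' ++ a :: ε₂'))) = E (a :: x :: s) := by
      have h1 : E (a :: y :: t) = E (a :: ((x :: χ) ++ a :: (m₁' ++ a :: ε₂'))) := by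
        have hlv : a :: y :: t = a :: (m₁' ++ a :: ((x :: χ) ++ a :: ε₂')) := by
          rw [hv2, hχ]; simp
        rw [hlv]; exact E_swap3 a m₁' (x :: χ) ε₂'
      calc E (a :: x :: (χ ++ a :: (m₁' ++ a :: ε₂')))
          = E (a :: ((x :: χ) ++ a :: (m₁' ++ a :: ε₂'))) := by simp
        _ = E (a :: y :: t) := h1.symm
        _ = E (a :: x :: s) := hE.symm
    have hbv2 : bigrams (r₀ ++ a :: (x :: (χ ++ a :: (m₁' ++ a :: ε₂')))) = bigrams w := by
      rw [bigrams_split r₀ a, hw, bigrams_split r₀ a, hE2]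
    by_cases hvw : r₀ ++ a :: (x :: (χ ++ a :: (m₁' ++ a :: ε₂'))) = w
    · exfalso
      have hσs : χ ++ a :: (m₁' ++ a :: ε₂') = s := by
        rw [hw] at hvw
        have h3 := List.append_cancel_left hvw
        exact (List.cons.inj (List.cons.inj h3).2).2
      exact hnoret (a :: x :: χ) (m₁'' ++ a :: ε₂')
        (by rw [← hσs, hm₁']; simp) (by simp)
    · have hwlen2 : w.length = r₀.length + 2 + s.length := by rw [hw]; simp; omega
      have hc1 : cpl v w = r₀.length + 1 := by
        rw [hv, hw, (by simp : r₀ ++ a :: (y :: t) = (r₀ ++ [a]) ++ (y :: t)),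
          (by simp : r₀ ++ a :: x :: s = (r₀ ++ [a]) ++ (x :: s)), cpl_prefix,
          cpl_cons_ne (Ne.symm hxy)]
        simp
      have hc2 : r₀.length + 2 ≤ cpl (r₀ ++ a :: (x :: (χ ++ a :: (m₁' ++ a :: ε₂')))) w := by
        rw [hw, (by simp : r₀ ++ a :: (x :: (χ ++ a :: (m₁' ++ a :: ε₂')))
            = (r₀ ++ [a, x]) ++ (χ ++ a :: (m₁' ++ a :: ε₂'))),
          (by simp : r₀ ++ a :: x :: s = (r₀ ++ [a, x]) ++ s), cpl_prefix]
        simp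
      have hlt2 : w.length - cpl (r₀ ++ a :: (x :: (χ ++ a :: (m₁' ++ a :: ε₂')))) w < n := by
        omega
      exact IH _ hlt2 _ hbv2 hvw (le_refl _)
  · -- CASE 2 : confinement contradiction
    exfalso
    obtain ⟨l₁', hl₁e⟩ := hl₁
    have hstep : ∀ g₁ z z' g₂, x :: m₂ = g₁ ++ z :: z' :: g₂ →
        z ∉ y :: ω₀ → z' ∉ y :: ω₀ := by
      intro g₁ z z' g₂ hg hz
      have hzm : z ∈ x :: m₂ := by rw [hg]; simp
      have hz'm : z' ∈ x :: m₂ := by rw [hg]; simp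
      have hza : z ≠ a := by
        intro h; rw [h] at hzm
        rcases List.mem_cons.1 hzm with h2 | h2
        · exact hxa h2.symm
        · exact hva h2
      have hz'a : z' ≠ a := by
        intro h; rw [h] at hz'm
        rcases List.mem_cons.1 hz'm with h2 | h2
        · exact hxa h2.symm
        · exact hva h2
      have hadj : (some z, some z') ∈ E (a :: x :: s) := by
        rw [hE]
        have hform : a :: y :: t = ((a :: m₁') ++ [a] ++ g₁) ++ z :: z' :: g₂ := by
          rw [hv1, hg]; simp
        rw [hform]; exact mem_E_of_adj _ _ _ _
      obtain ⟨n₁, n₂, hn⟩ := adj_of_mem_E hadj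
      have hcomb : n₁ ++ z :: z' :: n₂ = l₁ ++ a :: y :: ω₀ := hn.symm.trans hu
      rcases le_or_gt l₁.length n₁.length with hcase | hcase
      · exfalso
        obtain ⟨k, hk1, hk2⟩ := two_split hcomb.symm hcase
        cases k with
        | nil => exact hza (List.cons.inj hk2).1.symm
        | cons c k' =>
          have hk3 := (List.cons.inj hk2).2
          cases k' with
          | nil => exact hz (by rw [← (List.cons.inj hk3).1]; simp)
          | cons d k'' =>
            apply hz
            rw [List.mem_cons]; right
            rw [(List.cons.inj hk3).2]; simp
      · obtain ⟨k, hk1, hk2⟩ := two_split hcomb (le_of_lt hcase)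
        cases k with
        | nil => rw [hk1] at hcase; simp at hcase
        | cons c k' =>
          have hk3 := (List.cons.inj hk2).2
          cases k' with
          | nil => exact absurd (List.cons.inj hk3).1 hz'a
          | cons d k'' =>
            have hz'd := (List.cons.inj hk3).1
            exact hDELTA z' (by rw [hk1, hz'd]; simp) hz'a
    have hconf : ∀ z ∈ x :: m₂, z ∉ y :: ω₀ :=
      chain_confine m₂ x (by simp only [List.mem_cons, not_or]; exact ⟨hxy, hxt⟩) hstep
    have hmne : x :: m₂ ≠ [] := by simp
    have hLv : (some ((x :: m₂).getLast hmne), none) ∈ E (a :: y :: t) := by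
      apply mem_E_getLast _ ((a :: m₁') ++ [a] ++ (x :: m₂).dropLast)
      have e3 : x :: m₂ = (x :: m₂).dropLast ++ [(x :: m₂).getLast hmne] :=
        (List.dropLast_append_getLast hmne).symm
      rw [hv1]
      conv_lhs => rw [e3]
      simp
    have hLw : (some ((x :: m₂).getLast hmne), none) ∈ E (a :: x :: s) := by
      rw [hE]; exact hLv
    obtain ⟨n₁, hn₁⟩ := last_of_mem_E hLw
    have hcomb2 : (l₁ ++ [a]) ++ (y :: ω₀) = n₁ ++ [(x :: m₂).getLast hmne] := by
      rw [← hn₁, hu]; simp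
    have hlen2 : (l₁ ++ [a]).length ≤ n₁.length := by
      have h5 := congrArg List.length hcomb2
      simp only [List.length_append, List.length_cons, List.length_singleton] at h5
      simp only [List.length_append, List.length_singleton]
      omega
    obtain ⟨k, hk1, hk2⟩ := two_split hcomb2 hlen2
    have hLmem : (x :: m₂).getLast hmne ∈ y :: ω₀ := by rw [hk2]; simp
    exact absurd hLmem (hconf _ (List.getLast_mem hmne))

end SixAux

/-- `L_UNIQ = Σ* \ L_OBST`: a string is uniquely decodable iff it belongs to no
obstruction language `K_{x,a,b}`. -/
theorem stmt6 (α : Type) [Fintype α] :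
    {w : List α | UniqDec w} = Set.univ \ LObst α := by
  ext w
  show UniqDec w ↔ (w ∈ (Set.univ : Set (List α)) ∧ ¬ (w ∈ (LObst α : Set (List α))))
  simp only [Set.mem_setOf_eq, Set.mem_diff, Set.mem_univ, true_and]
  constructor
  · intro hu hobst
    obtain ⟨x, a, b, hax, hbx, hK⟩ := hobst
    obtain ⟨v, hbv, hnv⟩ := SixAux.dirA hax hbx hK
    exact hnv (hu v hbv)
  · intro hno v hbv
    by_contra hnv
    exact hno (SixAux.dirB_aux w (w.length - SixAux.cpl v w) v hbv hnv (le_refl _))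
end

section
/- The language L_UNIQ of uniquely decodable strings over a finite alphabet Σ is regular. -/
set_option linter.unusedSectionVars false
namespace UD

variable {β : Type*}

/-- The multiset of adjacent pairs (steps) of a list. -/
def steps (l : List β) : Multiset (β × β) := (l.zip l.tail : List (β × β))

@[simp] lemma steps_nil : steps ([] : List β) = 0 := rfl
@[simp] lemma steps_singleton (x : β) : steps [x] = 0 := rfl
@[simp] lemma steps_cons_cons (x y : β) (l : List β) :
    steps (x :: y :: l) = (x, y) ::ₘ steps (y :: l) := rfl

lemma steps_cons_head? {l : List β} {t : β} (h : l.head? = some t) (a : β) :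
    steps (a :: l) = (a, t) ::ₘ steps l := by
  cases l with
  | nil => simp at h
  | cons y l => simp at h; subst h; rfl

lemma card_steps {l : List β} (h : l ≠ []) : (steps l).card + 1 = l.length := by
  induction l with
  | nil => simp at h
  | cons x l ih =>
    cases l with
    | nil => simp [steps]
    | cons y m => simp only [steps_cons_cons, Multiset.card_cons]
                  have := ih (by simp)
                  simp at this ⊢; omega

lemma mem_steps {e : β × β} : ∀ {l : List β}, e ∈ steps l → e.1 ∈ l ∧ e.2 ∈ l := by
  intro l
  induction l with
  | nil => simp [steps]
  | cons x l ih =>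
    cases l with
    | nil => simp [steps]
    | cons y m =>
      intro h
      simp only [steps_cons_cons, Multiset.mem_cons] at h
      rcases h with h | h
      · subst h; simp
      · rcases ih h with ⟨h1, h2⟩
        exact ⟨by simp [List.mem_cons] at h1 ⊢; tauto, by simp [List.mem_cons] at h2 ⊢; tauto⟩

lemma steps_append_single : ∀ (l : List β) {u : β}, l.getLast? = some u → ∀ (x : β),
    steps (l ++ [x]) = (u, x) ::ₘ steps l := by
  intro l
  induction l with
  | nil => intro u h; simp at h
  | cons a l ih =>
    intro u h x
    cases l with
    | nil =>
      simp only [List.getLast?_singleton, Option.some_inj] at h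
      subst h; rfl
    | cons b m =>
      rw [List.getLast?_cons_cons] at h
      have := ih h x
      rw [show (b :: m ++ [x]) = b :: (m ++ [x]) from rfl] at this
      rw [show (a :: b :: m ++ [x]) = a :: (b :: (m ++ [x])) from rfl, steps_cons_cons, this,
        steps_cons_cons]
      exact (Multiset.cons_swap _ _ _)

lemma steps_append_cons : ∀ (B : List β) (x : β) (A : List β),
    steps (B ++ x :: A) = steps (B ++ [x]) + steps (x :: A) := by
  intro B
  induction B with
  | nil => intro x A; simp
  | cons b B ih =>
    intro x A
    cases B with
    | nil => simp [steps_cons_head? (l := x :: A) rfl]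
    | cons c C =>
      simp only [List.cons_append, steps_cons_cons] at *
      rw [ih]; rfl

section Counts
variable [DecidableEq β]

/-- number of edges with source `v`. -/
def srcC (N : Multiset (β × β)) (v : β) : ℕ := Multiset.countP (fun e => e.1 = v) N

/-- number of edges with target `v`. -/
def tgtC (N : Multiset (β × β)) (v : β) : ℕ := Multiset.countP (fun e => e.2 = v) N

@[simp] lemma srcC_zero (v : β) : srcC 0 v = 0 := rfl
@[simp] lemma tgtC_zero (v : β) : tgtC 0 v = 0 := rfl

lemma srcC_cons (e : β × β) (N : Multiset (β × β)) (v : β) :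
    srcC (e ::ₘ N) v = srcC N v + (if e.1 = v then 1 else 0) := by
  simp [srcC, Multiset.countP_cons]

lemma tgtC_cons (e : β × β) (N : Multiset (β × β)) (v : β) :
    tgtC (e ::ₘ N) v = tgtC N v + (if e.2 = v then 1 else 0) := by
  simp [tgtC, Multiset.countP_cons]

lemma srcC_add (M N : Multiset (β × β)) (v : β) : srcC (M + N) v = srcC M v + srcC N v := by
  simp [srcC, Multiset.countP_add]

lemma tgtC_add (M N : Multiset (β × β)) (v : β) : tgtC (M + N) v = tgtC M v + tgtC N v := by
  simp [tgtC, Multiset.countP_add]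

def occ (l : List β) (v : β) : ℕ := l.countP (fun u => u = v)

@[simp] lemma occ_nil (v : β) : occ ([] : List β) v = 0 := rfl

lemma occ_cons (a : β) (l : List β) (v : β) :
    occ (a :: l) v = occ l v + (if a = v then 1 else 0) := by
  simp [occ, List.countP_cons]

lemma occ_append (l m : List β) (v : β) : occ (l ++ m) v = occ l v + occ m v := by
  simp [occ, List.countP_append]

lemma occ_pos_iff {l : List β} {v : β} : 0 < occ l v ↔ v ∈ l := by
  simp only [occ, List.countP_pos_iff]
  constructor
  · rintro ⟨a, ha, hp⟩
    simp at hp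
    exact hp ▸ ha
  · intro h
    exact ⟨v, h, by simp⟩

lemma occ_singleton (x v : β) : occ [x] v = if x = v then 1 else 0 := by
  simp [occ_cons]

lemma srcC_pos_iff {N : Multiset (β × β)} {v : β} : 0 < srcC N v ↔ ∃ t, (v, t) ∈ N := by
  constructor
  · intro h
    rcases Multiset.countP_pos.1 h with ⟨e, he, hp⟩
    exact ⟨e.2, by obtain ⟨e1,e2⟩ := e; simp only at hp; subst hp; exact he⟩
  · rintro ⟨t, ht⟩
    exact Multiset.countP_pos.2 ⟨(v, t), ht, rfl⟩

lemma srcC_steps_count (l : List β) (v : β) :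
    srcC (steps l) v + (if l.getLast? = some v then 1 else 0) = occ l v := by
  induction l with
  | nil => simp
  | cons x l ih =>
    cases l with
    | nil => by_cases hxv : x = v <;> simp [hxv, occ_cons]
    | cons y m =>
      rw [steps_cons_cons, srcC_cons, List.getLast?_cons_cons, occ_cons]
      by_cases hxv : x = v <;> simp [hxv] <;> omega

lemma tgtC_steps_count (l : List β) (v : β) :
    tgtC (steps l) v + (if l.head? = some v then 1 else 0) = occ l v := by
  induction l with
  | nil => simp
  | cons x l ih =>
    cases l with
    | nil => by_cases hxv : x = v <;> simp [hxv, occ_cons]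
    | cons y m =>
      rw [steps_cons_cons, tgtC_cons, occ_cons]
      simp only [List.head?_cons] at ih ⊢
      by_cases hxv : x = v <;> by_cases hyv : y = v <;> simp [hxv, hyv] at ih ⊢ <;> omega

end Counts

section Euler
variable [DecidableEq β]

def reach (N : Multiset (β × β)) : β → β → Prop :=
  Relation.ReflTransGen (fun u w => (u, w) ∈ N)

lemma reach_mono {N N' : Multiset (β × β)} (h : ∀ e ∈ N, e ∈ N') {a v : β} :
    reach N a v → reach N' a v :=
  fun hr => Relation.ReflTransGen.mono (fun u w hm => h (u, w) hm) a v hr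

lemma mem_of_head? {l : List β} {a : β} (h : l.head? = some a) : a ∈ l := by
  cases l with
  | nil => simp at h
  | cons x l => simp at h; subst h; exact List.mem_cons_self

lemma ne_nil_of_head? {l : List β} {a : β} (h : l.head? = some a) : l ≠ [] := by
  cases l <;> simp_all

lemma getLast?_cons_ne_nil {l : List β} (h : l ≠ []) (a : β) :
    (a :: l).getLast? = l.getLast? := by
  cases l with
  | nil => simp at h
  | cons x m => rw [List.getLast?_cons_cons]

lemma trail_reach : ∀ (l : List β) {a v : β}, l.head? = some a → v ∈ l → reach (steps l) a v := by
  intro l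
  induction l with
  | nil => intro a v h hv; simp at hv
  | cons x l ih =>
    intro a v h hv
    simp only [List.head?_cons, Option.some_inj] at h; subst h
    cases l with
    | nil =>
      simp only [List.mem_singleton] at hv; subst hv; exact Relation.ReflTransGen.refl
    | cons y m =>
      rcases List.mem_cons.1 hv with rfl | hv'
      · exact Relation.ReflTransGen.refl
      · have h1 : reach (steps (y :: m)) y v := ih rfl hv'
        have h2 : reach (steps (x :: y :: m)) y v :=
          reach_mono (fun e he => by rw [steps_cons_cons]; exact Multiset.mem_cons_of_mem he) h1
        exact Relation.ReflTransGen.head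
          (by rw [steps_cons_cons]; exact Multiset.mem_cons_self _ _) h2

lemma sub_cons' {γ : Type*} [DecidableEq γ] (N : Multiset γ) (e : γ) (M : Multiset γ) :
    N - (e ::ₘ M) = N.erase e - M := by
  ext x
  by_cases hx : x = e
  · subst hx
    rw [Multiset.count_sub, Multiset.count_sub, Multiset.count_cons_self,
      Multiset.count_erase_self]
    omega
  · rw [Multiset.count_sub, Multiset.count_sub, Multiset.count_cons_of_ne hx,
      Multiset.count_erase_of_ne hx]

lemma greedy : ∀ (n : ℕ) (N : Multiset (β × β)) (a : β), N.card ≤ n →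
    ∃ (l : List β) (u : β), l.head? = some a ∧ l.getLast? = some u ∧ steps l ≤ N ∧
      srcC (N - steps l) u = 0 := by
  intro n
  induction n with
  | zero =>
    intro N a h
    have h0 : N = 0 := Multiset.card_eq_zero.1 (Nat.le_zero.1 h)
    subst h0
    exact ⟨[a], a, rfl, rfl, by simp, by simp⟩
  | succ n ih =>
    intro N a h
    by_cases hsrc : srcC N a = 0
    · exact ⟨[a], a, rfl, rfl, by simp, by simpa using hsrc⟩
    · obtain ⟨t, ht⟩ := srcC_pos_iff.1 (Nat.pos_of_ne_zero hsrc)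
      have hpos : 0 < N.card := Multiset.card_pos_iff_exists_mem.2 ⟨_, ht⟩
      obtain ⟨l, u, h1, h2, h3, h4⟩ := ih (N.erase (a, t)) t
        (by rw [Multiset.card_erase_of_mem ht, Nat.pred_eq_sub_one]; omega)
      have hlne : l ≠ [] := ne_nil_of_head? h1
      refine ⟨a :: l, u, rfl, ?_, ?_, ?_⟩
      · rw [getLast?_cons_ne_nil hlne]; exact h2
      · rw [steps_cons_head? h1]
        calc (a, t) ::ₘ steps l ≤ (a, t) ::ₘ N.erase (a, t) := Multiset.cons_le_cons _ h3
        _ = N := Multiset.cons_erase ht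
      · rw [steps_cons_head? h1, sub_cons']; exact h4

lemma srcC_steps_eq_tgtC_of_closed {K : List β} {v : β} (h1 : K.head? = some v)
    (h2 : K.getLast? = some v) (u : β) : srcC (steps K) u = tgtC (steps K) u := by
  have hs := srcC_steps_count K u
  have ht := tgtC_steps_count K u
  rw [h1] at ht; rw [h2] at hs
  omega

lemma exists_closed_trail {N : Multiset (β × β)} (hbal : ∀ v, srcC N v = tgtC N v) {v : β}
    (hv : 0 < srcC N v) :
    ∃ K : List β, K.head? = some v ∧ K.getLast? = some v ∧ steps K ≤ N ∧ steps K ≠ 0 := by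
  obtain ⟨l, u, h1, h2, h3, h4⟩ := greedy N.card N v le_rfl
  obtain ⟨K, hK⟩ := Multiset.le_iff_exists_add.1 h3
  have hrem : N - steps l = K := by rw [hK]; exact add_tsub_cancel_left _ _
  rw [hrem] at h4
  have hu : u = v := by
    by_contra hne
    have hs := srcC_steps_count l u
    have ht := tgtC_steps_count l u
    rw [h2] at hs; rw [h1] at ht
    have hNs : srcC N u = srcC (steps l) u + srcC K u := by rw [hK, srcC_add]
    have hNt : tgtC N u = tgtC (steps l) u + tgtC K u := by rw [hK, tgtC_add]
    have hb := hbal u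
    rw [if_pos rfl] at hs
    rw [if_neg (by simpa using (Ne.symm hne))] at ht
    omega
  subst hu
  refine ⟨l, h1, h2, h3, ?_⟩
  intro h0
  rw [h0] at hrem
  simp at hrem
  rw [← hrem] at h4
  omega

lemma steps_append_closed {K : List β} {v c : β} (h1 : K.head? = some v)
    (h2 : K.getLast? = some v) (A : List β) :
    steps (K ++ c :: A) = (v, c) ::ₘ (steps K + steps (c :: A)) := by
  rw [steps_append_cons K c A, steps_append_single K h2 c]
  rfl

lemma splice {l K : List β} {a b v : β} (hl : l.head? = some a) (hb : l.getLast? = some b)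
    (hv : v ∈ l) (h1 : K.head? = some v) (h2 : K.getLast? = some v) :
    ∃ l' : List β, l'.head? = some a ∧ l'.getLast? = some b ∧ steps l' = steps l + steps K := by
  obtain ⟨l₁, l₂, rfl⟩ := List.append_of_mem hv
  have hKne : K ≠ [] := ne_nil_of_head? h1
  obtain ⟨Kt, rfl⟩ : ∃ Kt, K = v :: Kt := by
    cases K with
    | nil => simp at h1
    | cons x m => simp at h1; subst h1; exact ⟨m, rfl⟩
  refine ⟨l₁ ++ (v :: Kt) ++ l₂, ?_, ?_, ?_⟩
  · cases l₁ with
    | nil => simpa using hl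
    | cons x m => simpa using hl
  · cases l₂ with
    | nil =>
      have hbv : b = v := by
        have h' : (l₁ ++ [v]).getLast? = some b := by simpa using hb
        rw [List.getLast?_append_of_ne_nil _ (by simp)] at h'
        simpa using h'.symm
      subst hbv
      simp [List.getLast?_append, h2]
    | cons c A =>
      have hb' : (c :: A).getLast? = some b := by
        rw [List.getLast?_append_of_ne_nil _ (by simp),
          getLast?_cons_ne_nil (by simp) v] at hb
        exact hb
      have : (v :: (Kt ++ c :: A)).getLast? = some b := by
        rw [getLast?_cons_ne_nil (by simp)]
        simp [List.getLast?_append, hb']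
      simp [List.getLast?_append, hb', this]
  · cases l₂ with
    | nil =>
      rw [List.append_nil, steps_append_cons l₁ v Kt,
        show (l₁ ++ [v]) = l₁ ++ v :: [] from rfl, steps_append_cons l₁ v []]
    | cons c A =>
      rw [show ((l₁ ++ (v :: Kt)) ++ (c :: A)) = l₁ ++ v :: (Kt ++ c :: A) from by simp,
        steps_append_cons l₁ v (Kt ++ c :: A),
        show (v :: (Kt ++ c :: A)) = (v :: Kt) ++ c :: A from rfl,
        steps_append_cons (v :: Kt) c A,
        steps_append_single (v :: Kt) h2 c,
        steps_append_cons l₁ v (c :: A),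
        show steps (v :: c :: A) = (v, c) ::ₘ steps (c :: A) from rfl]
      simp only [← Multiset.singleton_add]
      abel

lemma grow : ∀ (k : ℕ) (N : Multiset (β × β)) (a b : β) (l : List β),
    l.head? = some a → l.getLast? = some b → steps l ≤ N →
    (∀ e ∈ N, reach N a e.1) →
    (∀ v, srcC (N - steps l) v = tgtC (N - steps l) v) →
    (N - steps l).card ≤ k →
    ∃ l' : List β, l'.head? = some a ∧ l'.getLast? = some b ∧ steps l' = N := by
  intro k
  induction k with
  | zero =>
    intro N a b l h1 h2 h3 _ _ hcard
    have h0 : N - steps l = 0 := Multiset.card_eq_zero.1 (Nat.le_zero.1 hcard)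
    have : steps l = N := le_antisymm h3 (tsub_eq_zero_iff_le.1 h0)
    exact ⟨l, h1, h2, this⟩
  | succ k ih =>
    intro N a b l h1 h2 h3 hreach hbal hcard
    by_cases hrem : N - steps l = 0
    · have : steps l = N := le_antisymm h3 (tsub_eq_zero_iff_le.1 hrem)
      exact ⟨l, h1, h2, this⟩
    · obtain ⟨e₀, he₀⟩ := Multiset.exists_mem_of_ne_zero hrem
      have he₀N : e₀ ∈ N := Multiset.mem_of_le (Multiset.sub_le_self _ _) he₀
      have key : ∀ z : β, reach N a z → ((∃ v ∈ l, 0 < srcC (N - steps l) v) ∨ z ∈ l) := by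
        intro z hz
        induction hz with
        | refl => right; exact mem_of_head? h1
        | tail _ hedge ih' =>
          rename_i mid z' _
          rcases ih' with hdone | hmid
          · left; exact hdone
          · by_cases hmem : (mid, z') ∈ N - steps l
            · left
              exact ⟨mid, hmid, Multiset.countP_pos.2 ⟨(mid, z'), hmem, rfl⟩⟩
            · right
              have hstep : (mid, z') ∈ steps l := by
                by_contra hn
                apply hmem
                rw [← Multiset.count_pos, Multiset.count_sub]
                have c1 : 0 < Multiset.count (mid, z') N := Multiset.count_pos.2 hedge
                have c2 : Multiset.count (mid, z') (steps l) = 0 :=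
                  Multiset.count_eq_zero.2 hn
                omega
              exact (mem_steps hstep).2
      have hC : ∃ v ∈ l, 0 < srcC (N - steps l) v := by
        rcases key e₀.1 (hreach e₀ he₀N) with h | h
        · exact h
        · exact ⟨e₀.1, h, Multiset.countP_pos.2 ⟨e₀, he₀, rfl⟩⟩
      obtain ⟨v, hvl, hvsrc⟩ := hC
      obtain ⟨K, k1, k2, k3, k4⟩ := exists_closed_trail hbal hvsrc
      obtain ⟨l', j1, j2, j3⟩ := splice h1 h2 hvl k1 k2
      have hle' : steps l' ≤ N := by
        rw [j3]
        exact (le_tsub_iff_left h3).1 k3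
      have hrem' : N - steps l' = (N - steps l) - steps K := by
        rw [j3, tsub_add_eq_tsub_tsub]
      apply ih N a b l' j1 j2 hle' hreach
      · intro u
        rw [hrem']
        obtain ⟨R, hR⟩ := Multiset.le_iff_exists_add.1 k3
        have hRr : (N - steps l) - steps K = R := by rw [hR]; exact add_tsub_cancel_left _ _
        rw [hRr]
        have hb1 := hbal u
        rw [hR, srcC_add, tgtC_add] at hb1
        have := srcC_steps_eq_tgtC_of_closed k1 k2 u
        omega
      · rw [hrem']
        obtain ⟨R, hR⟩ := Multiset.le_iff_exists_add.1 k3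
        have hRr : (N - steps l) - steps K = R := by rw [hR]; exact add_tsub_cancel_left _ _
        rw [hRr]
        have hcard1 : (N - steps l).card = (steps K).card + R.card := by
          rw [hR, Multiset.card_add]
        have hKpos : 0 < (steps K).card := Multiset.card_pos.2 k4
        omega

theorem euler {N : Multiset (β × β)} {a b : β}
    (hbal : ∀ v, srcC N v + (if v = b then 1 else 0) = tgtC N v + (if v = a then 1 else 0))
    (hreach : ∀ e ∈ N, reach N a e.1) :
    ∃ l : List β, l.head? = some a ∧ l.getLast? = some b ∧ steps l = N := by
  obtain ⟨l, u, h1, h2, h3, h4⟩ := greedy N.card N a le_rfl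
  obtain ⟨K, hK⟩ := Multiset.le_iff_exists_add.1 h3
  have hrem : N - steps l = K := by rw [hK]; exact add_tsub_cancel_left _ _
  rw [hrem] at h4
  have hu : u = b := by
    by_contra hne
    have hs := srcC_steps_count l u
    have ht := tgtC_steps_count l u
    rw [h2, if_pos rfl] at hs
    rw [h1] at ht
    have hNs : srcC N u = srcC (steps l) u + srcC K u := by rw [hK, srcC_add]
    have hNt : tgtC N u = tgtC (steps l) u + tgtC K u := by rw [hK, tgtC_add]
    have hb' := hbal u
    rw [if_neg hne] at hb'
    by_cases hua : u = a
    · subst hua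
      rw [if_pos rfl] at ht hb'
      omega
    · rw [if_neg (fun h => hua (Option.some_inj.1 h).symm)] at ht
      rw [if_neg hua] at hb'
      omega
  subst hu
  have hbalK : ∀ v, srcC K v = tgtC K v := by
    intro v
    have hs := srcC_steps_count l v
    have ht := tgtC_steps_count l v
    rw [h2] at hs
    rw [h1] at ht
    have hNs : srcC N v = srcC (steps l) v + srcC K v := by rw [hK, srcC_add]
    have hNt : tgtC N v = tgtC (steps l) v + tgtC K v := by rw [hK, tgtC_add]
    have hb' := hbal v
    by_cases hvb : v = u
    · subst hvb
      rw [if_pos rfl] at hs hb'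
      by_cases hva : v = a
      · subst hva
        rw [if_pos rfl] at ht hb'
        omega
      · rw [if_neg (fun h => hva (Option.some_inj.1 h).symm)] at ht
        rw [if_neg hva] at hb'
        omega
    · rw [if_neg (fun h => hvb (Option.some_inj.1 h).symm)] at hs
      rw [if_neg hvb] at hb'
      by_cases hva : v = a
      · subst hva
        rw [if_pos rfl] at ht hb'
        omega
      · rw [if_neg (fun h => hva (Option.some_inj.1 h).symm)] at ht
        rw [if_neg hva] at hb'
        omega
  exact grow K.card N a u l h1 h2 h3 hreach
    (by rw [hrem]; exact hbalK) (by rw [hrem])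

def Viable (N : Multiset (β × β)) (a b : β) : Prop :=
  ∃ l : List β, l.head? = some a ∧ l.getLast? = some b ∧ steps l = N

theorem viable_invariant {N N' : Multiset (β × β)} {a b : β}
    (hV : Viable N a b) (hsupp : ∀ e, e ∈ N' ↔ e ∈ N)
    (hbal : ∀ v, srcC N' v + tgtC N v = tgtC N' v + srcC N v) : Viable N' a b := by
  obtain ⟨l, h1, h2, h3⟩ := hV
  apply euler
  · intro v
    have hs := srcC_steps_count l v
    have ht := tgtC_steps_count l v
    rw [h2] at hs
    rw [h1] at ht
    have hb' := hbal v
    rw [← h3] at hb'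
    by_cases hvb : v = b
    · subst hvb
      rw [if_pos rfl] at hs ⊢
      by_cases hva : v = a
      · subst hva
        rw [if_pos rfl] at ht ⊢
        omega
      · rw [if_neg (fun h => hva (Option.some_inj.1 h).symm)] at ht
        rw [if_neg hva]
        omega
    · rw [if_neg (fun h => hvb (Option.some_inj.1 h).symm)] at hs
      rw [if_neg hvb]
      by_cases hva : v = a
      · subst hva
        rw [if_pos rfl] at ht ⊢
        omega
      · rw [if_neg (fun h => hva (Option.some_inj.1 h).symm)] at ht
        rw [if_neg hva]
        omega
  · intro e he
    have heN : e ∈ N := (hsupp e).1 he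
    have hmem : e.1 ∈ l := (mem_steps (show e ∈ steps l by rw [h3]; exact heN)).1
    have : reach (steps l) a e.1 := trail_reach l h1 hmem
    rw [h3] at this
    exact reach_mono (fun e' he' => (hsupp e').2 he') this


end Euler

end UD

variable {α : Type*}

namespace UD

variable {α : Type*}

lemma delim_def (w : List α) : delim w = (none :: w.map some) ++ [none] := by simp [delim]

lemma bigrams_eq_steps (w : List α) : bigrams w = steps (delim w) := rfl

lemma delim_head (w : List α) : (delim w).head? = some none := rfl

lemma delim_ne_nil (w : List α) : delim w ≠ [] := by simp [delim]

lemma delim_getLast (w : List α) : (delim w).getLast? = some none := by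
  rw [delim_def, List.getLast?_concat]

lemma delim_length (w : List α) : (delim w).length = w.length + 2 := by simp [delim]

lemma occ_none_map_some [DecidableEq α] (w : List α) : occ (w.map some) (none : Option α) = 0 := by
  induction w with
  | nil => rfl
  | cons a w ih => simp [occ_cons, ih]

lemma delim_count_none [DecidableEq α] (w : List α) : occ (delim w) (none : Option α) = 2 := by
  rw [delim_def, occ_append, occ_cons, occ_none_map_some, occ_singleton]
  simp

lemma delim_injective : Function.Injective (delim : List α → List (Option α)) := by
  intro v w h
  simp only [delim, List.cons.injEq, true_and] at h
  have := List.append_inj_left' h (by simp)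
  exact List.map_injective_iff.2 (Option.some_injective α) this

lemma bigrams_card (w : List α) : (bigrams w).card + 1 = w.length + 2 := by
  rw [bigrams_eq_steps, card_steps (delim_ne_nil w), delim_length]

section ScanDef
variable [DecidableEq α]

def OneCond (B : List (Option α)) (x : Option α) : Prop :=
  ∀ t, (t, x) ∈ steps (B ++ [x]) → some t ≠ B.getLast? →
    ¬ Viable ((steps (B ++ [x])).erase (t, x)) none t

def Scan (w : List α) : Prop :=
  ∀ B x A, delim w = B ++ x :: A → B ≠ [] → OneCond B x

lemma eq_map_some : ∀ (m : List (Option α)), none ∉ m → ∃ v : List α, m = v.map some := by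
  intro m
  induction m with
  | nil => intro _; exact ⟨[], rfl⟩
  | cons a m ih =>
    intro h
    obtain ⟨v, hv⟩ := ih (fun hm => h (List.mem_cons_of_mem _ hm))
    cases a with
    | none => exact absurd List.mem_cons_self h
    | some a' => exact ⟨a' :: v, by simp [hv]⟩

lemma exists_delim {l : List (Option α)} (h1 : l.head? = some none)
    (h2 : l.getLast? = some none) (hc : occ l (none : Option α) = 2) : ∃ v, delim v = l := by
  cases l with
  | nil => simp at h1
  | cons z m =>
    simp only [List.head?_cons, Option.some_inj] at h1
    subst h1
    rcases List.eq_nil_or_concat m with rfl | ⟨m', z', rfl⟩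
    · simp [occ_cons] at hc
    · simp only [List.concat_eq_append] at h2 hc ⊢
      have hz' : z' = none := by
        rw [getLast?_cons_ne_nil (by simp), List.getLast?_concat] at h2
        exact Option.some_inj.1 h2
      subst hz'
      have hm' : (none : Option α) ∉ m' := by
        rw [occ_cons, occ_append, occ_singleton] at hc
        simp at hc
        intro hmem
        have h1' := occ_pos_iff.2 hmem
        omega
      obtain ⟨v, rfl⟩ := eq_map_some m' hm'
      exact ⟨v, rfl⟩

lemma head?_of_prefix {B : List (Option α)} {Y : List (Option α)} {w : List α}
    (h : delim w = B ++ Y) (hB : B ≠ []) : B.head? = some none := by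
  have := delim_head w
  rw [h, List.head?_append] at this
  cases B with
  | nil => simp at hB
  | cons b B' => simpa using this

lemma count_prefix_one {B : List (Option α)} {x : Option α} {A : List (Option α)}
    {w : List α} (h : delim w = B ++ x :: A) (hB : B ≠ []) :
    occ B (none : Option α) = 1 ∧ occ (x :: A) (none : Option α) = 1 := by
  have hc := delim_count_none w
  rw [h, occ_append] at hc
  have hBmem : (none : Option α) ∈ B := mem_of_head? (head?_of_prefix h hB)
  have hAmem : (none : Option α) ∈ x :: A := by
    have hgl := delim_getLast w
    rw [h, List.getLast?_append_of_ne_nil _ (by simp)] at hgl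
    exact List.mem_of_getLast? hgl
  have h1 : 0 < occ B (none : Option α) := occ_pos_iff.2 hBmem
  have h2 : 0 < occ (x :: A) (none : Option α) := occ_pos_iff.2 hAmem
  omega

lemma srcC_erase {N : Multiset ((Option α) × (Option α))} {e : (Option α) × (Option α)}
    (he : e ∈ N) (v : Option α) :
    srcC (N.erase e) v + (if e.1 = v then 1 else 0) = srcC N v := by
  conv_rhs => rw [← Multiset.cons_erase he]
  rw [srcC_cons]

lemma not_uniq_of_viable {w : List α} {B : List (Option α)} {x : Option α} {A : List (Option α)}
    (hsplit : delim w = B ++ x :: A) (hBne : B ≠ []) {t : Option α}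
    (hmem : (t, x) ∈ steps (B ++ [x])) (hne : some t ≠ B.getLast?)
    (hvia : Viable ((steps (B ++ [x])).erase (t, x)) none t) : ¬ UniqDec w := by
  obtain ⟨R, hR1, hR2, hR3⟩ := hvia
  have hRne : R ≠ [] := ne_nil_of_head? hR1
  set l' : List (Option α) := R ++ x :: A with hl'
  obtain ⟨hcB, hcA⟩ := count_prefix_one hsplit hBne
  -- steps of l'
  have hsteps : steps l' = steps (delim w) := by
    rw [hl', steps_append_cons R x A, hsplit, steps_append_cons B x A]
    congr 1
    rw [steps_append_single R hR2 x, hR3, Multiset.cons_erase hmem]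
  -- count of none in R
  have hsrcR : srcC (steps R) none + (if t = none then 1 else 0)
      = srcC (steps (B ++ [x])) none := by
    rw [hR3]
    exact srcC_erase hmem none
  have hsrcBx : srcC (steps (B ++ [x])) none = 1 := by
    have hs := srcC_steps_count (B ++ [x]) (none : Option α)
    rw [List.getLast?_concat, occ_append, occ_singleton, hcB] at hs
    by_cases hx : x = none
    · subst hx
      rw [if_pos rfl, if_pos rfl] at hs
      omega
    · rw [if_neg (fun hh => hx (Option.some_inj.1 hh)), if_neg hx] at hs
      omega
  have hcR : occ R (none : Option α) = 1 := by
    have hs := srcC_steps_count R (none : Option α)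
    rw [hR2] at hs
    by_cases ht : t = none
    · subst ht
      rw [if_pos rfl] at hs
      rw [if_pos rfl] at hsrcR
      omega
    · rw [if_neg (fun hh => ht (Option.some_inj.1 hh))] at hs
      rw [if_neg ht] at hsrcR
      omega
  -- l' is a delim word
  have hhead : l'.head? = some none := by
    rw [hl', List.head?_append, hR1]
    rfl
  have hlast : l'.getLast? = some none := by
    have := delim_getLast w
    rw [hsplit, List.getLast?_append_of_ne_nil _ (by simp)] at this
    rw [hl', List.getLast?_append_of_ne_nil _ (by simp)]
    exact this
  have hcount : occ l' (none : Option α) = 2 := by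
    rw [hl', occ_append, hcR, hcA]
  obtain ⟨v, hv⟩ := exists_delim hhead hlast hcount
  -- v ≠ w
  have hlen : R.length = B.length := by
    have c1 : (steps R).card + 1 = R.length := card_steps hRne
    have c2 : (steps (B ++ [x])).card + 1 = (B ++ [x]).length := card_steps (by simp)
    have c4 : 0 < (steps (B ++ [x])).card := by
      rw [Multiset.card_pos]
      exact fun h0 => by simp [h0] at hmem
    have c3 : (steps R).card = (steps (B ++ [x])).card - 1 := by
      rw [hR3, Multiset.card_erase_of_mem hmem, Nat.pred_eq_sub_one]
    have c5 : (B ++ [x]).length = B.length + 1 := by simp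
    omega
  have hvw : v ≠ w := by
    intro h
    subst h
    rw [hsplit] at hv
    rw [hl'] at hv
    have hBR : B = R := List.append_inj_left hv (by omega)
    rw [hBR] at hne
    exact hne hR2.symm
  intro hU
  exact hvw (hU v (by rw [bigrams_eq_steps, hv, hsteps, ← bigrams_eq_steps]))

lemma last_diff {γ : Type*} : ∀ (n : ℕ) (l₁ l₂ : List γ), l₁.length ≤ n →
    l₁.length = l₂.length → l₁ ≠ l₂ →
    ∃ B₁ B₂ A, l₁ = B₁ ++ A ∧ l₂ = B₂ ++ A ∧ B₁.length = B₂.length ∧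
      B₁.getLast? ≠ B₂.getLast? := by
  intro n
  induction n with
  | zero =>
    intro l₁ l₂ h hlen hne
    have h1 : l₁ = [] := List.length_eq_zero_iff.1 (Nat.le_zero.1 h)
    subst h1
    have : l₂ = [] := List.length_eq_zero_iff.1 (by omega)
    exact absurd (this ▸ rfl) hne
  | succ n ih =>
    intro l₁ l₂ h hlen hne
    rcases List.eq_nil_or_concat l₁ with rfl | ⟨m₁, z₁, rfl⟩
    · have : l₂ = [] := List.length_eq_zero_iff.1 (by simp at hlen; omega)
      exact absurd (this ▸ rfl) hne
    · rcases List.eq_nil_or_concat l₂ with rfl | ⟨m₂, z₂, rfl⟩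
      · rw [List.concat_eq_append] at hlen
        simp at hlen
      · simp only [List.concat_eq_append] at h hlen hne ⊢
        by_cases hz : z₁ = z₂
        · subst hz
          have hm : m₁ ≠ m₂ := fun h' => hne (by rw [h'])
          have hmlen : m₁.length = m₂.length := by
            simp only [List.length_append, List.length_singleton] at hlen
            omega
          obtain ⟨B₁, B₂, A, e1, e2, e3, e4⟩ := ih m₁ m₂
            (by simp at h; omega) hmlen hm
          exact ⟨B₁, B₂, A ++ [z₁], by rw [e1, List.append_assoc],
            by rw [e2, List.append_assoc], e3, e4⟩
        · refine ⟨m₁ ++ [z₁], m₂ ++ [z₂], [], by simp, by simp, by simpa using hlen, ?_⟩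
          rw [List.getLast?_concat, List.getLast?_concat]
          simpa using hz

theorem uniq_iff_scan (w : List α) : UniqDec w ↔ Scan w := by
  constructor
  · intro hU B x A hsplit hBne t hmem hne hvia
    exact not_uniq_of_viable hsplit hBne hmem hne hvia hU
  · intro hS v hbig
    by_contra hvw
    have hlen : (delim v).length = (delim w).length := by
      have c1 := bigrams_card v
      have c2 := bigrams_card w
      rw [hbig] at c1
      rw [delim_length, delim_length]
      omega
    have hdne : delim v ≠ delim w := fun h => hvw (delim_injective h)
    obtain ⟨B₂, B₁, A, e2, e1, e3, e4⟩ :=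
      last_diff (delim v).length (delim v) (delim w) le_rfl hlen hdne
    -- B₂ for v, B₁ for w
    rcases A with _ | ⟨x, A'⟩
    · rw [List.append_nil] at e1 e2
      rw [← e1, ← e2, delim_getLast, delim_getLast] at e4
      exact e4 rfl
    · have hB₁ne : B₁ ≠ [] := by
        intro h0
        rw [h0] at e3
        have : B₂ = [] := List.length_eq_zero_iff.1 (by simpa using e3)
        rw [h0, this] at e4
        exact e4 rfl
      have hB₂ne : B₂ ≠ [] := by
        intro h0
        rw [h0] at e3
        have : B₁ = [] := List.length_eq_zero_iff.1 (by simpa using e3.symm)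
        rw [h0, this] at e4
        exact e4 rfl
      have hstepsw : steps (delim w) = steps (B₁ ++ [x]) + steps (x :: A') := by
        rw [e1, steps_append_cons]
      have hstepsv : steps (delim v) = steps (B₂ ++ [x]) + steps (x :: A') := by
        rw [e2, steps_append_cons]
      have hPeq : steps (B₁ ++ [x]) = steps (B₂ ++ [x]) := by
        have : steps (delim v) = steps (delim w) := by
          rw [← bigrams_eq_steps, ← bigrams_eq_steps]; exact hbig
        rw [hstepsw, hstepsv] at this
        exact (add_right_cancel this).symm
      obtain ⟨t, hglt⟩ : ∃ t, B₂.getLast? = some t := by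
        cases hgl : B₂.getLast? with
        | none => rw [List.getLast?_eq_getLast hB₂ne] at hgl; simp at hgl
        | some t => exact ⟨t, rfl⟩
      have hmem : (t, x) ∈ steps (B₁ ++ [x]) := by
        rw [hPeq, steps_append_single B₂ hglt x]
        exact Multiset.mem_cons_self _ _
      have hne : some t ≠ B₁.getLast? := fun h => e4 (hglt.trans h)
      have hvia : Viable ((steps (B₁ ++ [x])).erase (t, x)) none t := by
        refine ⟨B₂, head?_of_prefix (Y := x :: A') e2 hB₂ne, hglt, ?_⟩
        rw [hPeq, steps_append_single B₂ hglt x, Multiset.erase_cons_head]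
      exact hS B₁ x A' e1 hB₁ne t hmem hne hvia

end ScanDef

end UD

namespace UD
section Cap
variable {α : Type*} [DecidableEq α]

def pre (w : List α) : List (Option α) := none :: w.map some

lemma pre_ne_nil (w : List α) : pre w ≠ [] := by simp [pre]

lemma pre_head (w : List α) : (pre w).head? = some none := rfl

lemma delim_eq_pre (w : List α) : delim w = pre w ++ [none] := by simp [delim, pre]

lemma pre_snoc (w : List α) (a : α) : pre (w ++ [a]) = pre w ++ [some a] := by simp [pre]

def PScan (w : List α) : Prop :=
  ∀ B x A, pre w = B ++ x :: A → B ≠ [] → OneCond B x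

lemma pscan_nil : PScan ([] : List α) := by
  intro B x A h hB
  have := congrArg List.length h
  simp [pre] at this
  rcases B with _ | ⟨b, B'⟩
  · exact absurd rfl hB
  · simp at this
    omega

lemma scan_iff_pscan (w : List α) : Scan w ↔ PScan w ∧ OneCond (pre w) none := by
  constructor
  · intro hS
    refine ⟨?_, ?_⟩
    · intro B x A h hB
      apply hS B x (A ++ [none]) ?_ hB
      rw [delim_eq_pre, h]
      simp
    · apply hS (pre w) none [] ?_ (pre_ne_nil w)
      rw [delim_eq_pre]
  · rintro ⟨hP, hF⟩ B x A h hB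
    rcases List.eq_nil_or_concat A with rfl | ⟨A', z, rfl⟩
    · rw [delim_eq_pre] at h
      obtain ⟨h1, h2⟩ := List.append_inj' h (by simp)
      simp only [List.cons.injEq] at h2
      obtain ⟨h2a, -⟩ := h2
      subst h1
      subst h2a
      exact hF
    · rw [delim_eq_pre, List.concat_eq_append, ← List.cons_append, ← List.append_assoc] at h
      obtain ⟨h1, _⟩ := List.append_inj' h (by simp)
      exact hP B x A' h1 hB

lemma pscan_snoc (w : List α) (a : α) :
    PScan (w ++ [a]) ↔ PScan w ∧ OneCond (pre w) (some a) := by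
  constructor
  · intro hS
    refine ⟨?_, ?_⟩
    · intro B x A h hB
      apply hS B x (A ++ [some a]) ?_ hB
      rw [pre_snoc, h]
      simp
    · apply hS (pre w) (some a) [] ?_ (pre_ne_nil w)
      rw [pre_snoc]
  · rintro ⟨hP, hF⟩ B x A h hB
    rw [pre_snoc] at h
    rcases List.eq_nil_or_concat A with rfl | ⟨A', z, rfl⟩
    · obtain ⟨h1, h2⟩ := List.append_inj' h (by simp)
      simp only [List.cons.injEq] at h2
      obtain ⟨h2a, -⟩ := h2
      subst h1
      subst h2a
      exact hF
    · rw [List.concat_eq_append, ← List.cons_append, ← List.append_assoc] at h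
      obtain ⟨h1, _⟩ := List.append_inj' h (by simp)
      exact hP B x A' h1 hB

def capM (N : Multiset (Option α × Option α)) : (Option α × Option α) → Fin 3 :=
  fun e => ⟨min (N.count e) 2, by omega⟩

def capAdd (g : (Option α × Option α) → Fin 3) (e₀ : Option α × Option α) :
    (Option α × Option α) → Fin 3 :=
  fun e => if e = e₀ then ⟨min ((g e).1 + 1) 2, by omega⟩ else g e

lemma capM_cons (e₀ : Option α × Option α) (N : Multiset (Option α × Option α)) :
    capM (e₀ ::ₘ N) = capAdd (capM N) e₀ := by
  funext e
  by_cases he : e = e₀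
  · subst he
    apply Fin.ext
    simp [capM, capAdd, Multiset.count_cons_self]
    omega
  · apply Fin.ext
    simp [capM, capAdd, he, Multiset.count_cons_of_ne he]

lemma count_min_eq {N N' : Multiset (Option α × Option α)} (h : capM N = capM N')
    (e : Option α × Option α) : min (N.count e) 2 = min (N'.count e) 2 := by
  have := congrFun h e
  simpa [capM, Fin.ext_iff] using this

lemma mem_iff_of_capM_eq {N N' : Multiset (Option α × Option α)} (h : capM N = capM N')
    (e : Option α × Option α) : e ∈ N ↔ e ∈ N' := by
  have := count_min_eq h e
  rw [← Multiset.count_pos, ← Multiset.count_pos]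
  omega

lemma mem_erase_iff_of_capM_eq {N N' : Multiset (Option α × Option α)} (h : capM N = capM N')
    (e₀ e : Option α × Option α) : e ∈ N.erase e₀ ↔ e ∈ N'.erase e₀ := by
  have hme := count_min_eq h e
  rw [← Multiset.count_pos, ← Multiset.count_pos]
  by_cases he : e = e₀
  · subst he
    rw [Multiset.count_erase_self, Multiset.count_erase_self]
    omega
  · rw [Multiset.count_erase_of_ne he, Multiset.count_erase_of_ne he]
    omega

lemma tgtC_erase {N : Multiset ((Option α) × (Option α))} {e : (Option α) × (Option α)}
    (he : e ∈ N) (v : Option α) :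
    tgtC (N.erase e) v + (if e.2 = v then 1 else 0) = tgtC N v := by
  conv_rhs => rw [← Multiset.cons_erase he]
  rw [tgtC_cons]

lemma oneCond_invariant {B B' : List (Option α)} {x prev : Option α}
    (hB : B.head? = some none) (hB' : B'.head? = some none)
    (hlB : B.getLast? = some prev) (hlB' : B'.getLast? = some prev)
    (hcap : capM (steps B) = capM (steps B')) :
    OneCond B x → OneCond B' x := by
  intro hO t hmem hne hvia
  have hsB : steps (B ++ [x]) = (prev, x) ::ₘ steps B := steps_append_single B hlB x
  have hsB' : steps (B' ++ [x]) = (prev, x) ::ₘ steps B' := steps_append_single B' hlB' x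
  have hcap2 : capM (steps (B ++ [x])) = capM (steps (B' ++ [x])) := by
    rw [hsB, hsB', capM_cons, capM_cons, hcap]
  have hmemB : (t, x) ∈ steps (B ++ [x]) := (mem_iff_of_capM_eq hcap2 _).2 hmem
  have hneB : some t ≠ B.getLast? := by rw [hlB, ← hlB']; exact hne
  apply hO t hmemB hneB
  apply viable_invariant hvia
  · intro e
    exact mem_erase_iff_of_capM_eq hcap2 (t, x) e
  · intro v
    have e1 := srcC_erase hmemB v
    have e2 := tgtC_erase hmemB v
    have e1' := srcC_erase hmem v
    have e2' := tgtC_erase hmem v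
    have b1s := srcC_steps_count (B ++ [x]) v
    have b1t := tgtC_steps_count (B ++ [x]) v
    have b2s := srcC_steps_count (B' ++ [x]) v
    have b2t := tgtC_steps_count (B' ++ [x]) v
    rw [List.getLast?_concat] at b1s b2s
    rw [List.head?_append, hB] at b1t
    rw [List.head?_append, hB'] at b2t
    simp only at e1 e2 e1' e2' b1t b2t
    split_ifs at e1 e2 e1' e2' b1s b1t b2s b2t <;> omega

def CondCap (g : (Option α × Option α) → Fin 3) (prev x : Option α) : Prop :=
  ∀ B : List (Option α), B.head? = some none → B.getLast? = some prev →
    capM (steps B) = g → OneCond B x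

lemma condCap_iff {B : List (Option α)} {prev x : Option α}
    (hh : B.head? = some none) (hl : B.getLast? = some prev) :
    CondCap (capM (steps B)) prev x ↔ OneCond B x :=
  ⟨fun h => h B hh hl rfl,
   fun h B' hh' hl' hc => oneCond_invariant hh hh' hl hl' hc.symm h⟩

end Cap

noncomputable def mdec (p : Prop) : Bool := @decide p (Classical.propDecidable p)

lemma mdec_iff {p : Prop} : mdec p = true ↔ p := by
  simp [mdec]

lemma mdec_and {p q : Prop} : mdec (p ∧ q) = (mdec p && mdec q) := by
  by_cases hp : p <;> by_cases hq : q <;> simp [mdec, hp, hq]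

lemma mdec_congr {p q : Prop} (h : p ↔ q) : mdec p = mdec q := by
  by_cases hp : p
  · simp [mdec, hp, h.1 hp]
  · have hq : ¬ q := fun hqq => hp (h.2 hqq)
    simp [mdec, hp, hq]

lemma regular_of_fun {α : Type} (S : Type) [Fintype S] (f : List α → S) (stp : S → α → S)
    (hstep : ∀ w a, f (w ++ [a]) = stp (f w) a) (Acc : Set S) (L : Language α)
    (hmem : ∀ w, w ∈ L ↔ f w ∈ Acc) : L.IsRegular := by
  refine ⟨S, inferInstance, ⟨stp, f [], Acc⟩, ?_⟩
  have heval : ∀ w, DFA.eval ⟨stp, f [], Acc⟩ w = f w := by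
    intro w
    induction w using List.reverseRecOn with
    | nil => rfl
    | append_singleton w a ih =>
      rw [hstep, ← ih]
      exact DFA.evalFrom_append_singleton _ _ _ _
  ext w
  rw [DFA.mem_accepts, heval]
  exact (hmem w).symm

end UD

/-- The language of uniquely decodable strings over a finite alphabet is regular. -/
theorem stmt7 (α : Type) [Fintype α] :
    Language.IsRegular {w : List α | UniqDec w} := by
  classical
  letI : DecidableEq α := Classical.decEq α
  refine UD.regular_of_fun (S := (((Option α × Option α) → Fin 3) × Option (Option α) × Bool))
    (f := fun w => (UD.capM (UD.steps (UD.pre w)), (UD.pre w).getLast?, UD.mdec (UD.PScan w)))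
    (stp := fun s a => (UD.capAdd s.1 ((s.2.1).getD none, some a), some (some a),
      s.2.2 && UD.mdec (UD.CondCap s.1 ((s.2.1).getD none) (some a))))
    ?_ {s | s.2.2 = true ∧ UD.CondCap s.1 ((s.2.1).getD none) none} _ ?_
  · intro w a
    obtain ⟨p, hp⟩ : ∃ p, (UD.pre w).getLast? = some p := by
      cases hq : (UD.pre w).getLast? with
      | none =>
        rw [List.getLast?_eq_getLast (UD.pre_ne_nil w)] at hq
        simp at hq
      | some p => exact ⟨p, rfl⟩
    have hsteps1 : UD.steps (UD.pre (w ++ [a]))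
        = (p, some a) ::ₘ UD.steps (UD.pre w) := by
      rw [UD.pre_snoc, UD.steps_append_single (UD.pre w) hp (some a)]
    refine Prod.ext ?_ (Prod.ext ?_ ?_)
    · show UD.capM (UD.steps (UD.pre (w ++ [a])))
        = UD.capAdd (UD.capM (UD.steps (UD.pre w))) (((UD.pre w).getLast?).getD none, some a)
      rw [hsteps1, UD.capM_cons, hp]
      rfl
    · show (UD.pre (w ++ [a])).getLast? = some (some a)
      rw [UD.pre_snoc, List.getLast?_concat]
    · show UD.mdec (UD.PScan (w ++ [a]))
        = (UD.mdec (UD.PScan w)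
          && UD.mdec (UD.CondCap (UD.capM (UD.steps (UD.pre w)))
            (((UD.pre w).getLast?).getD none) (some a)))
      rw [UD.mdec_congr (UD.pscan_snoc w a), UD.mdec_and]
      congr 1
      apply UD.mdec_congr
      rw [hp]
      exact (UD.condCap_iff (UD.pre_head w) hp).symm
  · intro w
    obtain ⟨p, hp⟩ : ∃ p, (UD.pre w).getLast? = some p := by
      cases hq : (UD.pre w).getLast? with
      | none =>
        rw [List.getLast?_eq_getLast (UD.pre_ne_nil w)] at hq
        simp at hq
      | some p => exact ⟨p, rfl⟩
    show UniqDec w ↔ _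
    rw [UD.uniq_iff_scan, UD.scan_iff_pscan]
    constructor
    · rintro ⟨h1, h2⟩
      refine ⟨UD.mdec_iff.2 h1, ?_⟩
      show UD.CondCap _ (((UD.pre w).getLast?).getD none) none
      rw [hp]
      exact (UD.condCap_iff (UD.pre_head w) hp).2 h2
    · rintro ⟨h1, h2⟩
      refine ⟨UD.mdec_iff.1 h1, ?_⟩
      simp only [hp, Option.getD_some] at h2
      exact (UD.condCap_iff (UD.pre_head w) hp).1 h2
end

section
/- Let G be a directed graph with a node g having distinct out-neighbors x, y such that there are directed paths x ⇒ g and y ⇒ g. Then at least one of the following holds: there is a path from x to g avoiding y, or there is a path from y to g avoiding x. -/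
variable {α : Type*}

/-- A directed walk in the graph `G` from `a` to `b` with list `l` of intermediate
vertices. -/
def Walk (G : α → α → Prop) (a b : α) (l : List α) : Prop :=
  List.Chain G a (l ++ [b])

lemma walk_suffix {G : α → α → Prop} {g : α} :
    ∀ (l : List α) (a : α), Walk G a g l → ∀ v ∈ l,
      ∃ l', Walk G v g l' ∧ v ∉ l' ∧ l' <:+ l := by
  intro l
  induction l with
  | nil => intro a _ v hv; simp at hv
  | cons c t ih =>
    intro a hw v hv
    have hw' : G a c ∧ List.Chain G c (t ++ [g]) := by
      exact List.chain_cons.mp hw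
    by_cases hvt : v ∈ t
    · obtain ⟨l', h1, h2, h3⟩ := ih c hw'.2 v hvt
      exact ⟨l', h1, h2, h3.trans (List.suffix_cons c t)⟩
    · have hvc : v = c := by
        rcases List.mem_cons.mp hv with h | h
        · exact h
        · exact absurd h hvt
      subst hvc
      exact ⟨t, hw'.2, hvt, List.suffix_cons v t⟩

/-- If `g` has distinct out-neighbors `x, y` with paths `x ⇒ g` and `y ⇒ g`, then
there is a path `x ⇒ g` avoiding `y` or a path `y ⇒ g` avoiding `x`. -/
theorem stmt9 (G : α → α → Prop) (g x y : α) (hgx : G g x) (hgy : G g y)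
    (hxy : x ≠ y) (hx : ∃ l, Walk G x g l) (hy : ∃ l, Walk G y g l) :
    (∃ l, Walk G x g l ∧ y ∉ l) ∨ (∃ l, Walk G y g l ∧ x ∉ l) := by
  obtain ⟨l, hl⟩ := hx
  by_cases hyl : y ∈ l
  · obtain ⟨l', h1, h2, _⟩ := walk_suffix l x hl y hyl
    by_cases hxl' : x ∈ l'
    · obtain ⟨l'', g1, g2, g3⟩ := walk_suffix l' y h1 x hxl'
      exact Or.inl ⟨l'', g1, fun hmem => h2 (g3.subset hmem)⟩
    · exact Or.inr ⟨l', h1, hxl'⟩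
  · exact Or.inl ⟨l, hl, hyl⟩
end

section
/- Every string over Σ whose letters appear in strictly increasing order (with respect to a fixed linear order on Σ, no repetitions) is uniquely decodable from its bigram counts. -/
variable {α : Type*}

lemma zip_tail_map_fst {β : Type*} (l : List β) :
    (l.zip l.tail).map Prod.fst = l.dropLast := by
  induction l with
  | nil => simp
  | cons a t ih =>
    cases t with
    | nil => simp
    | cons b r =>
      simp only [List.tail_cons, List.zip_cons_cons, List.map_cons, List.dropLast_cons₂]
      simpa using ih

lemma zip_tail_sub {β : Type*} (a : β) (t : List β) :
    ∀ p ∈ t.zip t.tail, p ∈ (a :: t).zip t := by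
  cases t with
  | nil => simp
  | cons c r =>
    intro p hp
    simp only [List.zip_cons_cons, List.mem_cons]
    right
    simpa using hp

lemma path_ext {β : Type*} (S : List (β × β))
    (hS : ∀ p ∈ S, ∀ q ∈ S, p.1 = q.1 → p = q) :
    ∀ l₁ l₂ : List β, l₁.length = l₂.length → l₁.head? = l₂.head? →
      (∀ p ∈ l₁.zip l₁.tail, p ∈ S) → (∀ p ∈ l₂.zip l₂.tail, p ∈ S) → l₁ = l₂ := by
  intro l₁
  induction l₁ with
  | nil =>
    intro l₂ hlen _ _ _
    cases l₂ with
    | nil => rfl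
    | cons b u => simp at hlen
  | cons a t ih =>
    intro l₂ hlen hhd h1 h2
    cases l₂ with
    | nil => simp at hlen
    | cons b u =>
      have hab : a = b := by simpa using hhd
      subst hab
      have hlen' : t.length = u.length := by simpa using hlen
      have hhd' : t.head? = u.head? := by
        cases t with
        | nil =>
          cases u with
          | nil => rfl
          | cons d s => simp at hlen'
        | cons c r =>
          cases u with
          | nil => simp at hlen'
          | cons d s =>
            have hc : (a, c) ∈ S := h1 (a, c) (by simp)
            have hd : (a, d) ∈ S := h2 (a, d) (by simp)
            have := hS _ hc _ hd rfl
            simp only [Prod.mk.injEq] at this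
            simp [this.2]
      have := ih u hlen' hhd'
        (fun p hp => h1 p (zip_tail_sub a t p hp))
        (fun p hp => h2 p (zip_tail_sub a u p hp))
      rw [this]

/-- Every strictly increasing string over a linearly ordered alphabet is uniquely
decodable from its bigram counts. -/
theorem stmt12 {α : Type*} [LinearOrder α] (w : List α)
    (hw : w.Chain' (· < ·)) : UniqDec w := by
  intro v hvw
  -- the list of bigrams of w
  set S : List (Option α × Option α) := (delim w).zip (delim w).tail with hSdef
  have hwnodup : w.Nodup :=
    ((List.isChain_iff_pairwise.mp hw).imp ne_of_lt)
  have hfst : (S.map Prod.fst).Nodup := by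
    have hdl : (delim w).dropLast = none :: w.map some := by
      have : delim w = (none :: w.map some) ++ [none] := by simp [delim]
      rw [this, List.dropLast_concat]
    rw [hSdef, zip_tail_map_fst, hdl, List.nodup_cons]
    exact ⟨by simp, hwnodup.map (Option.some_injective α)⟩
  have hS : ∀ p ∈ S, ∀ q ∈ S, p.1 = q.1 → p = q := by
    intro p hp q hq h
    exact List.inj_on_of_nodup_map hfst hp hq h
  -- lengths
  have hcard := congrArg Multiset.card hvw
  simp only [bigrams, Multiset.coe_card, List.length_zip, List.length_tail, delim,
    List.length_cons, List.length_append, List.length_map, List.length_singleton] at hcard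
  have hlen : v.length = w.length := by omega
  -- membership
  have hmemv : ∀ p ∈ (delim v).zip (delim v).tail, p ∈ S := by
    intro p hp
    have : p ∈ bigrams v := by simpa [bigrams] using hp
    rw [hvw] at this
    simpa [bigrams, hSdef] using this
  have hmemw : ∀ p ∈ S, p ∈ S := fun p hp => hp
  have hdelim : delim v = delim w := by
    apply path_ext S hS
    · simp [delim, hlen]
    · simp [delim]
    · exact hmemv
    · exact fun p hp => hp
  have : v.map some ++ [none] = w.map some ++ [none] := by
    simpa [delim] using hdelim
  have h2 : v.map some = w.map some := by
    rwa [List.append_left_inj] at this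
  exact List.map_injective_iff.mpr (Option.some_injective α) h2
end

section
/- Let w ∈ Σ* be a strictly increasing string over an ordered alphabet, and let x ∈ Σ be a letter not equal to the last letter of w. Then w·x·x ∈ L_UNIQ if and only if x does not occur in w. -/
variable {α : Type*}

namespace Stmt13Aux
def zp {β : Type*} (l : List β) : List (β × β) := l.zip l.tail

@[simp] lemma zp_nil {β : Type*} : zp ([] : List β) = [] := rfl
@[simp] lemma zp_single {β : Type*} (a : β) : zp [a] = [] := rfl
@[simp] lemma zp_cons {β : Type*} (a b : β) (l : List β) :
    zp (a :: b :: l) = (a, b) :: zp (b :: l) := rfl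

lemma zp_length {β : Type*} (l : List β) : (zp l).length = l.length - 1 := by
  simp [zp, List.length_zip]

lemma zp_append {β : Type*} (l : List β) (a : β) (m : List β) :
    zp (l ++ a :: m) = zp (l ++ [a]) ++ zp (a :: m) := by
  induction l with
  | nil => simp
  | cons c l ih =>
    cases l with
    | nil => simp
    | cons d l' =>
      simp only [List.cons_append, zp_cons] at *
      rw [ih]

lemma mem_fst_zp {β : Type*} : ∀ (l : List β) (p : β × β), p ∈ zp l → p.1 ∈ l.dropLast
  | [], p, h => by simp [zp] at h
  | [a], p, h => by simp at h
  | a :: b :: l, p, h => by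
    rw [zp_cons] at h
    rcases List.mem_cons.mp h with h | h
    · subst h; simp
    · have := mem_fst_zp (b :: l) p h
      rw [List.dropLast_cons₂]
      exact List.mem_cons_of_mem _ this

lemma key [LinearOrder α] (x : α) : ∀ (w : List α), w.Chain' (· < ·) → x ∉ w →
    ∀ (c : Option α), c ∉ w.map some → c ≠ some x →
    ∀ (v : List α),
    (zp (c :: v.map some ++ [none]) : Multiset (Option α × Option α)) =
      (zp (c :: w.map some ++ [some x, some x, none]) : Multiset (Option α × Option α)) →
    v = w ++ [x, x]
  | [], hchain, hxw, c, hc, hcx, v, h => by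
    -- RHS = [(c, some x), (some x, some x), (some x, none)]
    have hcard := congrArg Multiset.card h
    simp only [Multiset.coe_card, zp_length] at hcard
    simp only [List.length_append, List.length_cons, List.length_map, List.map_nil,
      List.nil_append, List.length_nil] at hcard
    match v, hcard with
    | [d, e], _ =>
      simp only [List.map_cons, List.map_nil, List.cons_append, List.nil_append, zp_cons,
        zp_single] at h
      have h1 : (c, some d) ∈ ((c, some x) :: (some x, some x) :: (some x, (none : Option α)) :: []) := by
        rw [← Multiset.mem_coe, ← h]; simp
      have h2 : (some e, (none : Option α)) ∈ ((c, some x) :: (some x, some x) :: (some x, (none : Option α)) :: []) := by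
        rw [← Multiset.mem_coe, ← h]; simp
      simp only [List.mem_cons, List.mem_singleton, Prod.mk.injEq, List.not_mem_nil, or_false] at h1 h2
      obtain ⟨-, hd⟩ | ⟨hc', -⟩ | ⟨-, hd⟩ := h1
      · obtain ⟨-, he⟩ | ⟨-, he⟩ | ⟨he, -⟩ := h2
        · exact absurd he.symm (by simp)
        · exact absurd he.symm (by simp)
        · simp at hd he; simp [hd, he]
      · exact absurd hc' hcx
      · exact absurd hd (by simp)
  | c₀ :: w', hchain, hxw, c, hc, hcx, v, h => by
    have hcard := congrArg Multiset.card h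
    simp only [Multiset.coe_card, zp_length] at hcard
    match v with
    | [] => simp at hcard
    | d :: v' =>
      simp only [List.map_cons, List.cons_append, zp_cons] at h
      rw [← Multiset.cons_coe, ← Multiset.cons_coe] at h
      have hd : d = c₀ := by
        have hmem : (c, some d) ∈ ((c, some c₀) ::ₘ
            (zp (some c₀ :: (List.map some w' ++ [some x, some x, none])) : Multiset (Option α × Option α))) := by
          rw [← h]; exact Multiset.mem_cons_self _ _
        rcases Multiset.mem_cons.mp hmem with hmem | hmem
        · exact Option.some_injective _ (congrArg Prod.snd hmem)
        · exfalso
          rw [Multiset.mem_coe] at hmem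
          have hfst := mem_fst_zp _ _ hmem
          have hdl : (some c₀ :: (List.map some w' ++ [some x, some x, none])).dropLast
              = some c₀ :: List.map some w' ++ [some x, some x] := by
            rw [show some c₀ :: (List.map some w' ++ [some x, some x, (none : Option α)])
                = (some c₀ :: List.map some w' ++ [some x, some x]) ++ [none] by simp,
              List.dropLast_concat]
          rw [hdl] at hfst
          simp only [List.mem_cons, List.mem_append, List.mem_singleton, List.not_mem_nil,
            or_false] at hfst
          rcases hfst with (h1 | h1) | h1 | h1
          · exact hc (by rw [h1]; simp)
          · exact hc (by simp only [List.map_cons]; exact List.mem_cons_of_mem _ h1)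
          · exact hcx h1
          · exact hcx h1
      rw [hd] at h
      have h' := (Multiset.cons_inj_right _).mp h
      have hpw : List.Pairwise (· < ·) (c₀ :: w') := List.isChain_iff_pairwise.mp hchain
      have hv' := key x w' hchain.tail (fun hm => hxw (List.mem_cons_of_mem _ hm)) (some c₀)
        (by
          simp only [List.mem_map, not_exists, not_and]
          intro a ha hsa
          have := (List.pairwise_cons.mp hpw).1 a ha
          rw [Option.some_injective _ hsa] at this
          exact lt_irrefl _ this)
        (by
          intro hsx
          exact hxw (by rw [Option.some_injective _ hsx.symm]; exact List.mem_cons_self))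
        v' (by
          simpa only [List.map_cons, List.cons_append, zp_cons] using h')
      rw [hd, hv']; simp

lemma bigrams_eq_zp (l : List α) : bigrams l = (zp (delim l) : Multiset (Option α × Option α)) := rfl

lemma swap_eq (a b : List α) (x : α) :
    bigrams (a ++ x :: x :: b ++ [x]) = bigrams ((a ++ x :: b) ++ [x, x]) := by
  rw [bigrams_eq_zp, bigrams_eq_zp]
  set P := (none :: List.map some a : List (Option α)) with hP
  set B := List.map some b with hB
  set X : Option α := some x with hX
  have h1 : delim (a ++ x :: x :: b ++ [x]) = P ++ X :: ((X :: B) ++ X :: [none]) := by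
    simp [delim, hP, hB, hX]
  have h2 : delim ((a ++ x :: b) ++ [x, x]) = P ++ X :: (B ++ X :: [X, none]) := by
    simp [delim, hP, hB, hX]
  have e1 : zp (delim (a ++ x :: x :: b ++ [x]))
      = zp (P ++ [X]) ++ ((X, X) :: (zp ((X :: B) ++ [X]) ++ zp (X :: [none]))) := by
    rw [h1, zp_append P X ((X :: B) ++ X :: [none])]
    congr 1
    rw [show (X :: ((X :: B) ++ X :: [none]) : List (Option α)) = X :: X :: (B ++ X :: [none]) by
      simp, zp_cons]
    congr 1
    rw [show (X :: (B ++ X :: [none]) : List (Option α)) = (X :: B) ++ X :: [none] by simp,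
      zp_append (X :: B) X [none]]
  have e2 : zp (delim ((a ++ x :: b) ++ [x, x]))
      = zp (P ++ [X]) ++ (zp ((X :: B) ++ [X]) ++ zp (X :: [X, none])) := by
    rw [h2, zp_append P X (B ++ X :: [X, none])]
    congr 1
    rw [show (X :: (B ++ X :: [X, none]) : List (Option α)) = (X :: B) ++ X :: [X, none] by simp,
      zp_append (X :: B) X [X, none]]
  rw [e1, e2]
  apply Multiset.coe_eq_coe.mpr
  apply List.Perm.append_left
  rw [show zp (X :: [X, (none : Option α)]) = [(X, X), (X, none)] from rfl,
    show zp (X :: [(none : Option α)]) = [(X, none)] from rfl]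
  exact List.perm_middle.symm

end Stmt13Aux

open Stmt13Aux in
/-- For a strictly increasing `w` and a letter `x` not equal to the last letter of
`w`: `w·x·x ∈ L_UNIQ` iff `x` does not occur in `w`. -/
theorem stmt13 {α : Type*} [LinearOrder α] (w : List α) (hw : w.Chain' (· < ·))
    (x : α) (hx : w.getLast? ≠ some x) :
    UniqDec (w ++ [x, x]) ↔ x ∉ w := by
  constructor
  · intro h hmem
    obtain ⟨a, b, rfl⟩ := List.append_of_mem hmem
    cases b with
    | nil =>
      apply hx
      simpa using List.getLast?_concat a
    | cons b₁ b' =>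
      have heq := h (a ++ x :: x :: (b₁ :: b') ++ [x]) (swap_eq a (b₁ :: b') x)
      simp only [List.append_assoc, List.cons_append] at heq
      have h2 := List.append_cancel_left heq
      have hxb : x = b₁ := by
        injection h2 with _ h3
        injection h3
      have hch : List.Chain' (· < ·) (x :: b₁ :: b') := hw.suffix ⟨a, rfl⟩
      have := (List.isChain_cons_cons.mp hch).1
      rw [hxb] at this
      exact lt_irrefl _ this
  · intro hnot v hv
    apply key x w hw hnot none (by simp) (by simp) v
    rw [bigrams_eq_zp, bigrams_eq_zp] at hv
    simpa [delim] using hv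
end
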